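/- arXiv:1403.5961 — 4 statements merged into one kernel-verified Lean document; each statement's English description precedes it below -/
import Mathlib

section
/- Let G be a cograph. If G contains an induced P3 and an induced 2K3, then G contains an induced subgraph isomorphic to 2K3 ∪ P3, to K3 ∪ diamond, to K3 ∪ paw, or to K1 ⊕ 2K3. -/
open SimpleGraph

/-- The disjoint union `G ∪ H` of two vertex-disjoint graphs. -/
def gUnion {α β : Type*} (G : SimpleGraph α) (H : SimpleGraph β) : SimpleGraph (α ⊕ β) where
  Adj x y :=
    match x, y with
    | Sum.inl a, Sum.inl b => G.Adj a b
    | Sum.inr a, Sum.inr b => H.Adj a b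
    | _, _ => False
  symm := by constructor; rintro (a | a) (b | b) h
             · exact G.adj_symm h
             · exact h.elim
             · exact h.elim
             · exact H.adj_symm h
  loopless := by constructor; rintro (a | a) h
                 · exact G.loopless.irrefl a h
                 · exact H.loopless.irrefl a h

/-- The join `G ⊕ H` of two vertex-disjoint graphs: disjoint union plus all edges across. -/
def gJoin {α β : Type*} (G : SimpleGraph α) (H : SimpleGraph β) : SimpleGraph (α ⊕ β) where
  Adj x y :=
    match x, y with
    | Sum.inl a, Sum.inl b => G.Adj a b
    | Sum.inr a, Sum.inr b => H.Adj a b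
    | _, _ => True
  symm := by constructor; rintro (a | a) (b | b) h
             · exact G.adj_symm h
             · trivial
             · trivial
             · exact H.adj_symm h
  loopless := by constructor; rintro (a | a) h
                 · exact G.loopless.irrefl a h
                 · exact H.loopless.irrefl a h

/-- The complete graph `Kₙ`. -/
def KG (n : ℕ) : SimpleGraph (Fin n) := ⊤

/-- The edgeless graph `nK₁` on `n` vertices. -/
def EG (n : ℕ) : SimpleGraph (Fin n) := ⊥

/-- `G` contains `H`, i.e. `H` is isomorphic to an induced subgraph of `G`. -/
def Contains {α β : Type*} (G : SimpleGraph α) (H : SimpleGraph β) : Prop :=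
  Nonempty (H ↪g G)

/-- A cograph is a `P₄`-free graph. -/
def IsCograph {α : Type*} (G : SimpleGraph α) : Prop :=
  ¬ Contains G (pathGraph 4)

/-- `G` is partitionable: its vertex set splits into a part inducing a triangle-free
graph and a part inducing a `P₃`-free graph. -/
def Partitionable {α : Type*} (G : SimpleGraph α) : Prop :=
  ∃ A : Set α, (G.induce A).CliqueFree 3 ∧ ¬ Contains (G.induce Aᶜ) (pathGraph 3)

/-- `G` is monopolar: its vertex set splits into an independent set and a part
inducing a `P₃`-free graph. -/
def Monopolar {α : Type*} (G : SimpleGraph α) : Prop :=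
  ∃ A : Set α, (G.induce A).CliqueFree 2 ∧ ¬ Contains (G.induce Aᶜ) (pathGraph 3)

/-- `G` is (1,2)-partitionable: its vertex set can be partitioned into at most one
clique and at most two independent sets (equivalently, covered by them). -/
def OneTwoPartitionable {α : Type*} (G : SimpleGraph α) : Prop :=
  ∃ C S₁ S₂ : Set α, C ∪ S₁ ∪ S₂ = Set.univ ∧ G.IsClique C ∧
    (G.induce S₁).CliqueFree 2 ∧ (G.induce S₂).CliqueFree 2

/-- A threshold graph is a `(2K₂, C₄, P₄)`-free graph. -/
def IsThreshold {α : Type*} (G : SimpleGraph α) : Prop :=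
  ¬ Contains G (gUnion (KG 2) (KG 2)) ∧ ¬ Contains G (cycleGraph 4) ∧
    ¬ Contains G (pathGraph 4)

/-- The diamond `K₂ ⊕ 2K₁`. -/
def diamond := gJoin (KG 2) (EG 2)

/-- The paw `K₁ ⊕ (K₁ ∪ K₂)`. -/
def paw := gJoin (KG 1) (gUnion (KG 1) (KG 2))

/-- The butterfly `K₁ ⊕ 2K₂`. -/
def butterfly := gJoin (KG 1) (gUnion (KG 2) (KG 2))

def twoK2 := gUnion (KG 2) (KG 2)

def twoK3 := gUnion (KG 3) (KG 3)

def K2uK1 := gUnion (KG 2) (KG 1)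


section AuxProof
open SimpleGraph
variable {α : Type*} {G : SimpleGraph α}

lemma p4free (hc : IsCograph G) {p q r s : α}
    (hpq : G.Adj p q) (hqr : G.Adj q r) (hrs : G.Adj r s)
    (hpr : ¬ G.Adj p r) (hps : ¬ G.Adj p s) (hqs : ¬ G.Adj q s) : False := by
  have hne_pr : p ≠ r := by rintro rfl; exact hps hrs
  have hne_ps : p ≠ s := by rintro rfl; exact hqs hpq.symm
  have hne_qs : q ≠ s := by rintro rfl; exact hps hpq
  apply hc
  refine ⟨⟨⟨![p,q,r,s], ?_⟩, ?_⟩⟩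
  · intro i j hij
    fin_cases i <;> fin_cases j <;>
      first
        | rfl
        | exact (hpq.ne hij).elim
        | exact (hpq.ne' hij).elim
        | exact (hqr.ne hij).elim
        | exact (hqr.ne' hij).elim
        | exact (hrs.ne hij).elim
        | exact (hrs.ne' hij).elim
        | exact (hne_pr hij).elim
        | exact (hne_pr hij.symm).elim
        | exact (hne_ps hij).elim
        | exact (hne_ps hij.symm).elim
        | exact (hne_qs hij).elim
        | exact (hne_qs hij.symm).elim
  · have hpq' := hpq.symm
    have hqr' := hqr.symm
    have hrs' := hrs.symm
    have hpr' : ¬ G.Adj r p := fun h => hpr h.symm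
    have hps' : ¬ G.Adj s p := fun h => hps h.symm
    have hqs' : ¬ G.Adj s q := fun h => hqs h.symm
    intro i j
    all_goals erw [Function.Embedding.coeFn_mk]
    fin_cases i <;> fin_cases j <;>
      · simp [pathGraph_adj, hpq, hqr, hrs, hpq', hqr', hrs',
          hpr, hps, hqs, hpr', hps', hqs', G.irrefl]
        try decide

end AuxProof

section AuxCons
open SimpleGraph
variable {α β : Type*} {G : SimpleGraph α}

@[simp] lemma gUnion_adj_ll (G : SimpleGraph α) (H : SimpleGraph β) (a b : α) :
    (gUnion G H).Adj (.inl a) (.inl b) ↔ G.Adj a b := Iff.rfl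
@[simp] lemma gUnion_adj_rr (G : SimpleGraph α) (H : SimpleGraph β) (a b : β) :
    (gUnion G H).Adj (.inr a) (.inr b) ↔ H.Adj a b := Iff.rfl
@[simp] lemma gUnion_adj_lr (G : SimpleGraph α) (H : SimpleGraph β) (a : α) (b : β) :
    (gUnion G H).Adj (.inl a) (.inr b) ↔ False := Iff.rfl
@[simp] lemma gUnion_adj_rl (G : SimpleGraph α) (H : SimpleGraph β) (a : β) (b : α) :
    (gUnion G H).Adj (.inr a) (.inl b) ↔ False := Iff.rfl
@[simp] lemma gJoin_adj_ll (G : SimpleGraph α) (H : SimpleGraph β) (a b : α) :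
    (gJoin G H).Adj (.inl a) (.inl b) ↔ G.Adj a b := Iff.rfl
@[simp] lemma gJoin_adj_rr (G : SimpleGraph α) (H : SimpleGraph β) (a b : β) :
    (gJoin G H).Adj (.inr a) (.inr b) ↔ H.Adj a b := Iff.rfl
@[simp] lemma gJoin_adj_lr (G : SimpleGraph α) (H : SimpleGraph β) (a : α) (b : β) :
    (gJoin G H).Adj (.inl a) (.inr b) ↔ True := Iff.rfl
@[simp] lemma gJoin_adj_rl (G : SimpleGraph α) (H : SimpleGraph β) (a : β) (b : α) :
    (gJoin G H).Adj (.inr a) (.inl b) ↔ True := Iff.rfl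
@[simp] lemma KG_adj (n : ℕ) (i j : Fin n) : (KG n).Adj i j ↔ i ≠ j := by
  simp [KG]
@[simp] lemma EG_adj (n : ℕ) (i j : Fin n) : (EG n).Adj i j ↔ False := by
  simp [EG]
@[simp] lemma twoK3_adj_ll (a b : Fin 3) :
    twoK3.Adj (.inl a) (.inl b) ↔ a ≠ b := by simp [twoK3]
@[simp] lemma twoK3_adj_rr (a b : Fin 3) :
    twoK3.Adj (.inr a) (.inr b) ↔ a ≠ b := by simp [twoK3]
@[simp] lemma twoK3_adj_lr (a b : Fin 3) :
    twoK3.Adj (.inl a) (.inr b) ↔ False := Iff.rfl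
@[simp] lemma twoK3_adj_rl (a b : Fin 3) :
    twoK3.Adj (.inr a) (.inl b) ↔ False := Iff.rfl

/-- `2K3 ∪ P3` constructor. -/
lemma cons1 (a b c d e f x y z : α)
    (hab : G.Adj a b) (hac : G.Adj a c) (hbc : G.Adj b c)
    (hde : G.Adj d e) (hdf : G.Adj d f) (hef : G.Adj e f)
    (had : ¬ G.Adj a d) (hae : ¬ G.Adj a e) (haf : ¬ G.Adj a f)
    (hbd : ¬ G.Adj b d) (hbe : ¬ G.Adj b e) (hbf : ¬ G.Adj b f)
    (hcd : ¬ G.Adj c d) (hce : ¬ G.Adj c e) (hcf : ¬ G.Adj c f)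
    (nad : a ≠ d) (nae : a ≠ e) (naf : a ≠ f)
    (nbd : b ≠ d) (nbe : b ≠ e) (nbf : b ≠ f)
    (ncd : c ≠ d) (nce : c ≠ e) (ncf : c ≠ f)
    (hxy : G.Adj x y) (hyz : G.Adj y z) (hxz : ¬ G.Adj x z) (nxz : x ≠ z)
    (hax : ¬ G.Adj a x) (hay : ¬ G.Adj a y) (haz : ¬ G.Adj a z)
    (hbx : ¬ G.Adj b x) (hby : ¬ G.Adj b y) (hbz : ¬ G.Adj b z)
    (hcx : ¬ G.Adj c x) (hcy : ¬ G.Adj c y) (hcz : ¬ G.Adj c z)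
    (nax : a ≠ x) (nay : a ≠ y) (naz : a ≠ z)
    (nbx : b ≠ x) (nby : b ≠ y) (nbz : b ≠ z)
    (ncx : c ≠ x) (ncy : c ≠ y) (ncz : c ≠ z)
    (hdx : ¬ G.Adj d x) (hdy : ¬ G.Adj d y) (hdz : ¬ G.Adj d z)
    (hex : ¬ G.Adj e x) (hey : ¬ G.Adj e y) (hez : ¬ G.Adj e z)
    (hfx : ¬ G.Adj f x) (hfy : ¬ G.Adj f y) (hfz : ¬ G.Adj f z)
    (ndx : d ≠ x) (ndy : d ≠ y) (ndz : d ≠ z)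
    (nex : e ≠ x) (ney : e ≠ y) (nez : e ≠ z)
    (nfx : f ≠ x) (nfy : f ≠ y) (nfz : f ≠ z) :
    Nonempty ((gUnion twoK3 (pathGraph 3)) ↪g G) := by
  refine ⟨⟨⟨fun v => match v with
    | .inl (.inl i) => ![a,b,c] i
    | .inl (.inr i) => ![d,e,f] i
    | .inr i => ![x,y,z] i, ?_⟩, ?_⟩⟩
  · rintro ((i|i)|i) ((j|j)|j) hij
    · fin_cases i <;> fin_cases j <;>
        (first
          | rfl
          | exact (hab.ne hij).elim
          | exact (hab.ne' hij).elim
          | exact (hac.ne hij).elim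
          | exact (hac.ne' hij).elim
          | exact (hbc.ne hij).elim
          | exact (hbc.ne' hij).elim)
    · fin_cases i <;> fin_cases j <;>
        (first
          | exact (nad hij).elim
          | exact (nae hij).elim
          | exact (naf hij).elim
          | exact (nbd hij).elim
          | exact (nbe hij).elim
          | exact (nbf hij).elim
          | exact (ncd hij).elim
          | exact (nce hij).elim
          | exact (ncf hij).elim)
    · fin_cases i <;> fin_cases j <;>
        (first
          | exact (nax hij).elim
          | exact (nay hij).elim
          | exact (naz hij).elim
          | exact (nbx hij).elim
          | exact (nby hij).elim
          | exact (nbz hij).elim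
          | exact (ncx hij).elim
          | exact (ncy hij).elim
          | exact (ncz hij).elim)
    · fin_cases i <;> fin_cases j <;>
        (first
          | exact (nad hij.symm).elim
          | exact (nae hij.symm).elim
          | exact (naf hij.symm).elim
          | exact (nbd hij.symm).elim
          | exact (nbe hij.symm).elim
          | exact (nbf hij.symm).elim
          | exact (ncd hij.symm).elim
          | exact (nce hij.symm).elim
          | exact (ncf hij.symm).elim)
    · fin_cases i <;> fin_cases j <;>
        (first
          | rfl
          | exact (hde.ne hij).elim
          | exact (hde.ne' hij).elim
          | exact (hdf.ne hij).elim
          | exact (hdf.ne' hij).elim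
          | exact (hef.ne hij).elim
          | exact (hef.ne' hij).elim)
    · fin_cases i <;> fin_cases j <;>
        (first
          | exact (ndx hij).elim
          | exact (ndy hij).elim
          | exact (ndz hij).elim
          | exact (nex hij).elim
          | exact (ney hij).elim
          | exact (nez hij).elim
          | exact (nfx hij).elim
          | exact (nfy hij).elim
          | exact (nfz hij).elim)
    · fin_cases i <;> fin_cases j <;>
        (first
          | exact (nax hij.symm).elim
          | exact (nay hij.symm).elim
          | exact (naz hij.symm).elim
          | exact (nbx hij.symm).elim
          | exact (nby hij.symm).elim
          | exact (nbz hij.symm).elim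
          | exact (ncx hij.symm).elim
          | exact (ncy hij.symm).elim
          | exact (ncz hij.symm).elim)
    · fin_cases i <;> fin_cases j <;>
        (first
          | exact (ndx hij.symm).elim
          | exact (ndy hij.symm).elim
          | exact (ndz hij.symm).elim
          | exact (nex hij.symm).elim
          | exact (ney hij.symm).elim
          | exact (nez hij.symm).elim
          | exact (nfx hij.symm).elim
          | exact (nfy hij.symm).elim
          | exact (nfz hij.symm).elim)
    · fin_cases i <;> fin_cases j <;>
        (first
          | rfl
          | exact (hxy.ne hij).elim
          | exact (hxy.ne' hij).elim
          | exact (hyz.ne hij).elim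
          | exact (hyz.ne' hij).elim
          | exact (nxz hij).elim
          | exact (nxz hij.symm).elim)
  · have rda : ¬ G.Adj d a := fun h => had h.symm
    have rea : ¬ G.Adj e a := fun h => hae h.symm
    have rfa : ¬ G.Adj f a := fun h => haf h.symm
    have rdb : ¬ G.Adj d b := fun h => hbd h.symm
    have reb : ¬ G.Adj e b := fun h => hbe h.symm
    have rfb : ¬ G.Adj f b := fun h => hbf h.symm
    have rdc : ¬ G.Adj d c := fun h => hcd h.symm
    have rec' : ¬ G.Adj e c := fun h => hce h.symm
    have rfc : ¬ G.Adj f c := fun h => hcf h.symm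
    have rxa : ¬ G.Adj x a := fun h => hax h.symm
    have rya : ¬ G.Adj y a := fun h => hay h.symm
    have rza : ¬ G.Adj z a := fun h => haz h.symm
    have rxb : ¬ G.Adj x b := fun h => hbx h.symm
    have ryb : ¬ G.Adj y b := fun h => hby h.symm
    have rzb : ¬ G.Adj z b := fun h => hbz h.symm
    have rxc : ¬ G.Adj x c := fun h => hcx h.symm
    have ryc : ¬ G.Adj y c := fun h => hcy h.symm
    have rzc : ¬ G.Adj z c := fun h => hcz h.symm
    have rxd : ¬ G.Adj x d := fun h => hdx h.symm
    have ryd : ¬ G.Adj y d := fun h => hdy h.symm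
    have rzd : ¬ G.Adj z d := fun h => hdz h.symm
    have rxe : ¬ G.Adj x e := fun h => hex h.symm
    have rye : ¬ G.Adj y e := fun h => hey h.symm
    have rze : ¬ G.Adj z e := fun h => hez h.symm
    have rxf : ¬ G.Adj x f := fun h => hfx h.symm
    have ryf : ¬ G.Adj y f := fun h => hfy h.symm
    have rzf : ¬ G.Adj z f := fun h => hfz h.symm
    have rzx : ¬ G.Adj z x := fun h => hxz h.symm
    rintro ((i|i)|i) ((j|j)|j)
    all_goals erw [Function.Embedding.coeFn_mk]
    · fin_cases i <;> fin_cases j <;>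
        simp [hab, hac, hbc, hab.symm, hac.symm, hbc.symm, G.irrefl]
    · fin_cases i <;> fin_cases j <;>
        simp [had, hae, haf, hbd, hbe, hbf, hcd, hce, hcf]
    · fin_cases i <;> fin_cases j <;>
        simp [hax, hay, haz, hbx, hby, hbz, hcx, hcy, hcz]
    · fin_cases i <;> fin_cases j <;>
        simp [rda, rea, rfa, rdb, reb, rfb, rdc, rec', rfc]
    · fin_cases i <;> fin_cases j <;>
        simp [hde, hdf, hef, hde.symm, hdf.symm, hef.symm, G.irrefl]
    · fin_cases i <;> fin_cases j <;>
        simp [hdx, hdy, hdz, hex, hey, hez, hfx, hfy, hfz]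
    · fin_cases i <;> fin_cases j <;>
        simp [rxa, rya, rza, rxb, ryb, rzb, rxc, ryc, rzc]
    · fin_cases i <;> fin_cases j <;>
        simp [rxd, ryd, rzd, rxe, rye, rze, rxf, ryf, rzf]
    · fin_cases i <;> fin_cases j <;>
        · simp [pathGraph_adj, hxy, hyz, hxz, hxy.symm, hyz.symm, rzx, G.irrefl]
          try decide

/-- `K3 ∪ diamond` constructor. -/
lemma cons2 (k1 k2 k3 u1 u2 v1 v2 : α)
    (hk12 : G.Adj k1 k2) (hk13 : G.Adj k1 k3) (hk23 : G.Adj k2 k3)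
    (hu : G.Adj u1 u2) (hv : ¬ G.Adj v1 v2) (nv : v1 ≠ v2)
    (h11 : G.Adj u1 v1) (h12 : G.Adj u1 v2) (h21 : G.Adj u2 v1) (h22 : G.Adj u2 v2)
    (cu11 : ¬ G.Adj u1 k1) (cu12 : ¬ G.Adj u1 k2) (cu13 : ¬ G.Adj u1 k3)
    (cu21 : ¬ G.Adj u2 k1) (cu22 : ¬ G.Adj u2 k2) (cu23 : ¬ G.Adj u2 k3)
    (cv11 : ¬ G.Adj v1 k1) (cv12 : ¬ G.Adj v1 k2) (cv13 : ¬ G.Adj v1 k3)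
    (cv21 : ¬ G.Adj v2 k1) (cv22 : ¬ G.Adj v2 k2) (cv23 : ¬ G.Adj v2 k3)
    (mu11 : u1 ≠ k1) (mu12 : u1 ≠ k2) (mu13 : u1 ≠ k3)
    (mu21 : u2 ≠ k1) (mu22 : u2 ≠ k2) (mu23 : u2 ≠ k3)
    (mv11 : v1 ≠ k1) (mv12 : v1 ≠ k2) (mv13 : v1 ≠ k3)
    (mv21 : v2 ≠ k1) (mv22 : v2 ≠ k2) (mv23 : v2 ≠ k3) :
    Nonempty ((gUnion (KG 3) diamond) ↪g G) := by
  refine ⟨⟨⟨fun v => match v with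
    | .inl i => ![k1,k2,k3] i
    | .inr (.inl i) => ![u1,u2] i
    | .inr (.inr i) => ![v1,v2] i, ?_⟩, ?_⟩⟩
  · rintro (i|i|i) (j|j|j) hij
    · fin_cases i <;> fin_cases j <;>
        (first
          | rfl
          | exact (hk12.ne hij).elim
          | exact (hk12.ne' hij).elim
          | exact (hk13.ne hij).elim
          | exact (hk13.ne' hij).elim
          | exact (hk23.ne hij).elim
          | exact (hk23.ne' hij).elim)
    · fin_cases i <;> fin_cases j <;>
        (first
          | exact (mu11 hij.symm).elim
          | exact (mu12 hij.symm).elim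
          | exact (mu13 hij.symm).elim
          | exact (mu21 hij.symm).elim
          | exact (mu22 hij.symm).elim
          | exact (mu23 hij.symm).elim)
    · fin_cases i <;> fin_cases j <;>
        (first
          | exact (mv11 hij.symm).elim
          | exact (mv12 hij.symm).elim
          | exact (mv13 hij.symm).elim
          | exact (mv21 hij.symm).elim
          | exact (mv22 hij.symm).elim
          | exact (mv23 hij.symm).elim)
    · fin_cases i <;> fin_cases j <;>
        (first
          | exact (mu11 hij).elim
          | exact (mu12 hij).elim
          | exact (mu13 hij).elim
          | exact (mu21 hij).elim
          | exact (mu22 hij).elim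
          | exact (mu23 hij).elim)
    · fin_cases i <;> fin_cases j <;>
        (first
          | rfl
          | exact (hu.ne hij).elim
          | exact (hu.ne' hij).elim)
    · fin_cases i <;> fin_cases j <;>
        (first
          | exact (h11.ne hij).elim
          | exact (h12.ne hij).elim
          | exact (h21.ne hij).elim
          | exact (h22.ne hij).elim)
    · fin_cases i <;> fin_cases j <;>
        (first
          | exact (mv11 hij).elim
          | exact (mv12 hij).elim
          | exact (mv13 hij).elim
          | exact (mv21 hij).elim
          | exact (mv22 hij).elim
          | exact (mv23 hij).elim)
    · fin_cases i <;> fin_cases j <;>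
        (first
          | exact (h11.ne' hij).elim
          | exact (h12.ne' hij).elim
          | exact (h21.ne' hij).elim
          | exact (h22.ne' hij).elim)
    · fin_cases i <;> fin_cases j <;>
        (first
          | rfl
          | exact (nv hij).elim
          | exact (nv hij.symm).elim)
  · have ru1 : ¬ G.Adj k1 u1 := fun h => cu11 h.symm
    have ru2 : ¬ G.Adj k2 u1 := fun h => cu12 h.symm
    have ru3 : ¬ G.Adj k3 u1 := fun h => cu13 h.symm
    have ru4 : ¬ G.Adj k1 u2 := fun h => cu21 h.symm
    have ru5 : ¬ G.Adj k2 u2 := fun h => cu22 h.symm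
    have ru6 : ¬ G.Adj k3 u2 := fun h => cu23 h.symm
    have rv1 : ¬ G.Adj k1 v1 := fun h => cv11 h.symm
    have rv2 : ¬ G.Adj k2 v1 := fun h => cv12 h.symm
    have rv3 : ¬ G.Adj k3 v1 := fun h => cv13 h.symm
    have rv4 : ¬ G.Adj k1 v2 := fun h => cv21 h.symm
    have rv5 : ¬ G.Adj k2 v2 := fun h => cv22 h.symm
    have rv6 : ¬ G.Adj k3 v2 := fun h => cv23 h.symm
    have rvv : ¬ G.Adj v2 v1 := fun h => hv h.symm
    rintro (i|i|i) (j|j|j)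
    all_goals erw [Function.Embedding.coeFn_mk]
    · fin_cases i <;> fin_cases j <;>
        simp [diamond, hk12, hk13, hk23, hk12.symm, hk13.symm, hk23.symm, G.irrefl]
    · fin_cases i <;> fin_cases j <;> simp [diamond, ru1, ru2, ru3, ru4, ru5, ru6]
    · fin_cases i <;> fin_cases j <;> simp [diamond, rv1, rv2, rv3, rv4, rv5, rv6]
    · fin_cases i <;> fin_cases j <;> simp [diamond, cu11, cu12, cu13, cu21, cu22, cu23]
    · fin_cases i <;> fin_cases j <;> simp [diamond, hu, hu.symm, G.irrefl]
    · fin_cases i <;> fin_cases j <;> simp [diamond, h11, h12, h21, h22]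
    · fin_cases i <;> fin_cases j <;> simp [diamond, cv11, cv12, cv13, cv21, cv22, cv23]
    · fin_cases i <;> fin_cases j <;>
        simp [diamond, h11.symm, h12.symm, h21.symm, h22.symm]
    · fin_cases i <;> fin_cases j <;> simp [diamond, hv, rvv, G.irrefl]

/-- `K3 ∪ paw` constructor. -/
lemma cons3 (k1 k2 k3 h s u1 u2 : α)
    (hk12 : G.Adj k1 k2) (hk13 : G.Adj k1 k3) (hk23 : G.Adj k2 k3)
    (hhs : G.Adj h s) (hhu1 : G.Adj h u1) (hhu2 : G.Adj h u2)
    (hu : G.Adj u1 u2) (hsu1 : ¬ G.Adj s u1) (hsu2 : ¬ G.Adj s u2)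
    (ns1 : s ≠ u1) (ns2 : s ≠ u2)
    (ch1 : ¬ G.Adj h k1) (ch2 : ¬ G.Adj h k2) (ch3 : ¬ G.Adj h k3)
    (cs1 : ¬ G.Adj s k1) (cs2 : ¬ G.Adj s k2) (cs3 : ¬ G.Adj s k3)
    (cu11 : ¬ G.Adj u1 k1) (cu12 : ¬ G.Adj u1 k2) (cu13 : ¬ G.Adj u1 k3)
    (cu21 : ¬ G.Adj u2 k1) (cu22 : ¬ G.Adj u2 k2) (cu23 : ¬ G.Adj u2 k3)
    (mh1 : h ≠ k1) (mh2 : h ≠ k2) (mh3 : h ≠ k3)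
    (ms1 : s ≠ k1) (ms2 : s ≠ k2) (ms3 : s ≠ k3)
    (mu11 : u1 ≠ k1) (mu12 : u1 ≠ k2) (mu13 : u1 ≠ k3)
    (mu21 : u2 ≠ k1) (mu22 : u2 ≠ k2) (mu23 : u2 ≠ k3) :
    Nonempty ((gUnion (KG 3) paw) ↪g G) := by
  refine ⟨⟨⟨fun v => match v with
    | .inl i => ![k1,k2,k3] i
    | .inr (.inl _) => h
    | .inr (.inr (.inl _)) => s
    | .inr (.inr (.inr i)) => ![u1,u2] i, ?_⟩, ?_⟩⟩
  · rintro (i|i|i|i) (j|j|j|j) hij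
    · fin_cases i <;> fin_cases j <;>
        (first
          | rfl
          | exact (hk12.ne hij).elim
          | exact (hk12.ne' hij).elim
          | exact (hk13.ne hij).elim
          | exact (hk13.ne' hij).elim
          | exact (hk23.ne hij).elim
          | exact (hk23.ne' hij).elim)
    · fin_cases i <;>
        (first
          | exact (mh1 hij.symm).elim
          | exact (mh2 hij.symm).elim
          | exact (mh3 hij.symm).elim)
    · fin_cases i <;>
        (first
          | exact (ms1 hij.symm).elim
          | exact (ms2 hij.symm).elim
          | exact (ms3 hij.symm).elim)
    · fin_cases i <;> fin_cases j <;>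
        (first
          | exact (mu11 hij.symm).elim
          | exact (mu12 hij.symm).elim
          | exact (mu13 hij.symm).elim
          | exact (mu21 hij.symm).elim
          | exact (mu22 hij.symm).elim
          | exact (mu23 hij.symm).elim)
    · fin_cases j <;>
        (first
          | exact (mh1 hij).elim
          | exact (mh2 hij).elim
          | exact (mh3 hij).elim)
    · rw [Subsingleton.elim i j]
    · exact (hhs.ne hij).elim
    · fin_cases j <;>
        (first
          | exact (hhu1.ne hij).elim
          | exact (hhu2.ne hij).elim)
    · fin_cases j <;>
        (first
          | exact (ms1 hij).elim
          | exact (ms2 hij).elim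
          | exact (ms3 hij).elim)
    · exact (hhs.ne' hij).elim
    · rw [Subsingleton.elim i j]
    · fin_cases j <;>
        (first
          | exact (ns1 hij).elim
          | exact (ns2 hij).elim)
    · fin_cases i <;> fin_cases j <;>
        (first
          | exact (mu11 hij).elim
          | exact (mu12 hij).elim
          | exact (mu13 hij).elim
          | exact (mu21 hij).elim
          | exact (mu22 hij).elim
          | exact (mu23 hij).elim)
    · fin_cases i <;>
        (first
          | exact (hhu1.ne' hij).elim
          | exact (hhu2.ne' hij).elim)
    · fin_cases i <;>
        (first
          | exact (ns1 hij.symm).elim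
          | exact (ns2 hij.symm).elim)
    · fin_cases i <;> fin_cases j <;>
        (first
          | rfl
          | exact (hu.ne hij).elim
          | exact (hu.ne' hij).elim)
  · have rh1 : ¬ G.Adj k1 h := fun hh => ch1 hh.symm
    have rh2 : ¬ G.Adj k2 h := fun hh => ch2 hh.symm
    have rh3 : ¬ G.Adj k3 h := fun hh => ch3 hh.symm
    have rs1 : ¬ G.Adj k1 s := fun hh => cs1 hh.symm
    have rs2 : ¬ G.Adj k2 s := fun hh => cs2 hh.symm
    have rs3 : ¬ G.Adj k3 s := fun hh => cs3 hh.symm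
    have rv1 : ¬ G.Adj k1 u1 := fun hh => cu11 hh.symm
    have rv2 : ¬ G.Adj k2 u1 := fun hh => cu12 hh.symm
    have rv3 : ¬ G.Adj k3 u1 := fun hh => cu13 hh.symm
    have rv4 : ¬ G.Adj k1 u2 := fun hh => cu21 hh.symm
    have rv5 : ¬ G.Adj k2 u2 := fun hh => cu22 hh.symm
    have rv6 : ¬ G.Adj k3 u2 := fun hh => cu23 hh.symm
    have rsu1 : ¬ G.Adj u1 s := fun hh => hsu1 hh.symm
    have rsu2 : ¬ G.Adj u2 s := fun hh => hsu2 hh.symm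
    rintro (i|i|i|i) (j|j|j|j)
    all_goals erw [Function.Embedding.coeFn_mk]
    · fin_cases i <;> fin_cases j <;>
        simp [paw, hk12, hk13, hk23, hk12.symm, hk13.symm, hk23.symm, G.irrefl]
    · fin_cases i <;> simp [paw, rh1, rh2, rh3]
    · fin_cases i <;> simp [paw, rs1, rs2, rs3]
    · fin_cases i <;> fin_cases j <;> simp [paw, rv1, rv2, rv3, rv4, rv5, rv6]
    · fin_cases j <;> simp [paw, ch1, ch2, ch3]
    · rw [Subsingleton.elim i j]; simp [paw, G.irrefl]
    · simp [paw, hhs]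
    · fin_cases j <;> simp [paw, hhu1, hhu2]
    · fin_cases j <;> simp [paw, cs1, cs2, cs3]
    · simp [paw, hhs.symm]
    · rw [Subsingleton.elim i j]; simp [paw, G.irrefl]
    · fin_cases j <;> simp [paw, hsu1, hsu2]
    · fin_cases i <;> fin_cases j <;> simp [paw, cu11, cu12, cu13, cu21, cu22, cu23]
    · fin_cases i <;> simp [paw, hhu1.symm, hhu2.symm]
    · fin_cases i <;> simp [paw, rsu1, rsu2]
    · fin_cases i <;> fin_cases j <;> simp [paw, hu, hu.symm, G.irrefl]

/-- `K1 ⊕ 2K3` constructor. -/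
lemma cons4 (w a b c d e f : α)
    (hab : G.Adj a b) (hac : G.Adj a c) (hbc : G.Adj b c)
    (hde : G.Adj d e) (hdf : G.Adj d f) (hef : G.Adj e f)
    (had : ¬ G.Adj a d) (hae : ¬ G.Adj a e) (haf : ¬ G.Adj a f)
    (hbd : ¬ G.Adj b d) (hbe : ¬ G.Adj b e) (hbf : ¬ G.Adj b f)
    (hcd : ¬ G.Adj c d) (hce : ¬ G.Adj c e) (hcf : ¬ G.Adj c f)
    (nad : a ≠ d) (nae : a ≠ e) (naf : a ≠ f)
    (nbd : b ≠ d) (nbe : b ≠ e) (nbf : b ≠ f)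
    (ncd : c ≠ d) (nce : c ≠ e) (ncf : c ≠ f)
    (hwa : G.Adj w a) (hwb : G.Adj w b) (hwc : G.Adj w c)
    (hwd : G.Adj w d) (hwe : G.Adj w e) (hwf : G.Adj w f) :
    Nonempty ((gJoin (KG 1) twoK3) ↪g G) := by
  refine ⟨⟨⟨fun v => match v with
    | .inl _ => w
    | .inr (.inl i) => ![a,b,c] i
    | .inr (.inr i) => ![d,e,f] i, ?_⟩, ?_⟩⟩
  · rintro (i|i|i) (j|j|j) hij
    · fin_cases i; fin_cases j; rfl
    · fin_cases j <;>
        [exact (hwa.ne hij).elim; exact (hwb.ne hij).elim; exact (hwc.ne hij).elim]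
    · fin_cases j <;>
        [exact (hwd.ne hij).elim; exact (hwe.ne hij).elim; exact (hwf.ne hij).elim]
    · fin_cases i <;>
        [exact (hwa.ne' hij).elim; exact (hwb.ne' hij).elim; exact (hwc.ne' hij).elim]
    · fin_cases i <;> fin_cases j <;>
        (first
          | rfl
          | exact (hab.ne hij).elim
          | exact (hab.ne' hij).elim
          | exact (hac.ne hij).elim
          | exact (hac.ne' hij).elim
          | exact (hbc.ne hij).elim
          | exact (hbc.ne' hij).elim)
    · fin_cases i <;> fin_cases j <;>
        (first
          | exact (nad hij).elim
          | exact (nae hij).elim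
          | exact (naf hij).elim
          | exact (nbd hij).elim
          | exact (nbe hij).elim
          | exact (nbf hij).elim
          | exact (ncd hij).elim
          | exact (nce hij).elim
          | exact (ncf hij).elim)
    · fin_cases i <;>
        [exact (hwd.ne' hij).elim; exact (hwe.ne' hij).elim; exact (hwf.ne' hij).elim]
    · fin_cases i <;> fin_cases j <;>
        (first
          | exact (nad hij.symm).elim
          | exact (nae hij.symm).elim
          | exact (naf hij.symm).elim
          | exact (nbd hij.symm).elim
          | exact (nbe hij.symm).elim
          | exact (nbf hij.symm).elim
          | exact (ncd hij.symm).elim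
          | exact (nce hij.symm).elim
          | exact (ncf hij.symm).elim)
    · fin_cases i <;> fin_cases j <;>
        (first
          | rfl
          | exact (hde.ne hij).elim
          | exact (hde.ne' hij).elim
          | exact (hdf.ne hij).elim
          | exact (hdf.ne' hij).elim
          | exact (hef.ne hij).elim
          | exact (hef.ne' hij).elim)
  · rintro (i|i|i) (j|j|j)
    all_goals erw [Function.Embedding.coeFn_mk]
    · fin_cases i; fin_cases j; simp
    · fin_cases j <;> simp [hwa, hwb, hwc]
    · fin_cases j <;> simp [hwd, hwe, hwf]
    · fin_cases i <;> simp [hwa.symm, hwb.symm, hwc.symm]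
    · fin_cases i <;> fin_cases j <;>
        simp [hab, hac, hbc, hab.symm, hac.symm, hbc.symm, G.irrefl]
    · fin_cases i <;> fin_cases j <;> simp [had, hae, haf, hbd, hbe, hbf, hcd, hce, hcf]
    · fin_cases i <;> simp [hwd.symm, hwe.symm, hwf.symm]
    · have hda : ¬ G.Adj d a := fun h => had h.symm
      have hea : ¬ G.Adj e a := fun h => hae h.symm
      have hfa : ¬ G.Adj f a := fun h => haf h.symm
      have hdb : ¬ G.Adj d b := fun h => hbd h.symm
      have heb : ¬ G.Adj e b := fun h => hbe h.symm
      have hfb : ¬ G.Adj f b := fun h => hbf h.symm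
      have hdc : ¬ G.Adj d c := fun h => hcd h.symm
      have hec : ¬ G.Adj e c := fun h => hce h.symm
      have hfc : ¬ G.Adj f c := fun h => hcf h.symm
      fin_cases i <;> fin_cases j <;>
        simp [hda, hea, hfa, hdb, heb, hfb, hdc, hec, hfc]
    · fin_cases i <;> fin_cases j <;>
        simp [hde, hdf, hef, hde.symm, hdf.symm, hef.symm, G.irrefl]

end AuxCons

section AuxMain
open SimpleGraph
variable {α : Type*} {G : SimpleGraph α}

/-- An induced `2K3` on six labelled vertices. -/
structure T2K3 (G : SimpleGraph α) (a b c d e f : α) : Prop where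
  hab : G.Adj a b
  hac : G.Adj a c
  hbc : G.Adj b c
  hde : G.Adj d e
  hdf : G.Adj d f
  hef : G.Adj e f
  had : ¬ G.Adj a d
  hae : ¬ G.Adj a e
  haf : ¬ G.Adj a f
  hbd : ¬ G.Adj b d
  hbe : ¬ G.Adj b e
  hbf : ¬ G.Adj b f
  hcd : ¬ G.Adj c d
  hce : ¬ G.Adj c e
  hcf : ¬ G.Adj c f
  nad : a ≠ d
  nae : a ≠ e
  naf : a ≠ f
  nbd : b ≠ d
  nbe : b ≠ e
  nbf : b ≠ f
  ncd : c ≠ d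
  nce : c ≠ e
  ncf : c ≠ f

/-- An induced `P3` on three labelled vertices. -/
structure IP3 (G : SimpleGraph α) (x y z : α) : Prop where
  hxy : G.Adj x y
  hyz : G.Adj y z
  hxz : ¬ G.Adj x z
  nxz : x ≠ z

lemma IP3.symm {x y z : α} (P : IP3 G x y z) : IP3 G z y x :=
  ⟨P.hyz.symm, P.hxy.symm, fun h => P.hxz h.symm, P.nxz.symm⟩

lemma T2K3.swap {a b c d e f : α} (T : T2K3 G a b c d e f) : T2K3 G d e f a b c :=
  ⟨T.hde, T.hdf, T.hef, T.hab, T.hac, T.hbc,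
   fun h => T.had h.symm, fun h => T.hbd h.symm, fun h => T.hcd h.symm,
   fun h => T.hae h.symm, fun h => T.hbe h.symm, fun h => T.hce h.symm,
   fun h => T.haf h.symm, fun h => T.hbf h.symm, fun h => T.hcf h.symm,
   T.nad.symm, T.nbd.symm, T.ncd.symm, T.nae.symm, T.nbe.symm, T.nce.symm,
   T.naf.symm, T.nbf.symm, T.ncf.symm⟩

lemma T2K3.rot1 {a b c d e f : α} (T : T2K3 G a b c d e f) : T2K3 G b c a d e f :=
  ⟨T.hbc, T.hab.symm, T.hac.symm, T.hde, T.hdf, T.hef,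
   T.hbd, T.hbe, T.hbf, T.hcd, T.hce, T.hcf, T.had, T.hae, T.haf,
   T.nbd, T.nbe, T.nbf, T.ncd, T.nce, T.ncf, T.nad, T.nae, T.naf⟩

lemma T2K3.rot2 {a b c d e f : α} (T : T2K3 G a b c d e f) : T2K3 G a b c e f d :=
  ⟨T.hab, T.hac, T.hbc, T.hef, T.hde.symm, T.hdf.symm,
   T.hae, T.haf, T.had, T.hbe, T.hbf, T.hbd, T.hce, T.hcf, T.hcd,
   T.nae, T.naf, T.nad, T.nbe, T.nbf, T.nbd, T.nce, T.ncf, T.ncd⟩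

/-- Bridge case: a vertex adjacent to both triangles yields `K1 ⊕ 2K3`. -/
lemma bridge (hcog : IsCograph G) {a b c d e f : α} (T : T2K3 G a b c d e f)
    (w : α) (hwa : G.Adj w a) (hwd : G.Adj w d) :
    Nonempty ((gJoin (KG 1) twoK3) ↪g G) := by
  obtain ⟨hab, hac, hbc, hde, hdf, hef, had, hae, haf, hbd, hbe, hbf,
    hcd, hce, hcf, nad, nae, naf, nbd, nbe, nbf, ncd, nce, ncf⟩ := T
  have hwb : G.Adj w b := by
    by_contra hwb
    exact p4free hcog hab.symm hwa.symm hwd (fun h => hwb h.symm) hbd had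
  have hwc : G.Adj w c := by
    by_contra hwc
    exact p4free hcog hac.symm hwa.symm hwd (fun h => hwc h.symm) hcd had
  have hwe : G.Adj w e := by
    by_contra hwe
    exact p4free hcog hde.symm hwd.symm hwa (fun h => hwe h.symm)
      (fun h => hae h.symm) (fun h => had h.symm)
  have hwf : G.Adj w f := by
    by_contra hwf
    exact p4free hcog hdf.symm hwd.symm hwa (fun h => hwf h.symm)
      (fun h => haf h.symm) (fun h => had h.symm)
  exact cons4 w a b c d e f hab hac hbc hde hdf hef had hae haf hbd hbe hbf
    hcd hce hcf nad nae naf nbd nbe nbf ncd nce ncf hwa hwb hwc hwd hwe hwf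

/-- `u` is in the closed neighbourhood of the triangle `{a,b,c}`. -/
def nearT (G : SimpleGraph α) (a b c u : α) : Prop :=
  u = a ∨ u = b ∨ u = c ∨ G.Adj u a ∨ G.Adj u b ∨ G.Adj u c

lemma nearT_of_mem {a b c u : α} (h : u = a ∨ u = b ∨ u = c) : nearT G a b c u := by
  rcases h with h|h|h
  exacts [Or.inl h, Or.inr (Or.inl h), Or.inr (Or.inr (Or.inl h))]

lemma nearT_of_adj {a b c u p : α} (hp : p = a ∨ p = b ∨ p = c) (h : G.Adj u p) :
    nearT G a b c u := by
  rcases hp with rfl|rfl|rfl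
  exacts [Or.inr (Or.inr (Or.inr (Or.inl h))),
    Or.inr (Or.inr (Or.inr (Or.inr (Or.inl h)))),
    Or.inr (Or.inr (Or.inr (Or.inr (Or.inr h))))]

lemma nearT_elim {a b c u : α} (h : nearT G a b c u) :
    (u = a ∨ u = b ∨ u = c) ∨ ∃ p, (p = a ∨ p = b ∨ p = c) ∧ G.Adj u p := by
  rcases h with h|h|h|h|h|h
  · exact Or.inl (Or.inl h)
  · exact Or.inl (Or.inr (Or.inl h))
  · exact Or.inl (Or.inr (Or.inr h))
  · exact Or.inr ⟨a, Or.inl rfl, h⟩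
  · exact Or.inr ⟨b, Or.inr (Or.inl rfl), h⟩
  · exact Or.inr ⟨c, Or.inr (Or.inr rfl), h⟩

lemma mem3_adj {a b c u p : α} (hp : p = a ∨ p = b ∨ p = c) (h : G.Adj u p) :
    G.Adj u a ∨ G.Adj u b ∨ G.Adj u c := by
  rcases hp with rfl|rfl|rfl
  exacts [Or.inl h, Or.inr (Or.inl h), Or.inr (Or.inr h)]

section NoBridge
variable {a b c d e f : α}

/-- nonadjacency across the two triangles, as quantified fact. -/
lemma crossT (T : T2K3 G a b c d e f) :
    ∀ u v, (u = a ∨ u = b ∨ u = c) → (v = d ∨ v = e ∨ v = f) →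
      ¬ G.Adj u v ∧ u ≠ v := by
  rintro u v (rfl|rfl|rfl) (rfl|rfl|rfl)
  exacts [⟨T.had, T.nad⟩, ⟨T.hae, T.nae⟩, ⟨T.haf, T.naf⟩,
    ⟨T.hbd, T.nbd⟩, ⟨T.hbe, T.nbe⟩, ⟨T.hbf, T.nbf⟩,
    ⟨T.hcd, T.ncd⟩, ⟨T.hce, T.nce⟩, ⟨T.hcf, T.ncf⟩]

variable (hcog : IsCograph G) (T : T2K3 G a b c d e f)
  (hnb : ∀ w, ¬ ((G.Adj w a ∨ G.Adj w b ∨ G.Adj w c) ∧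
                 (G.Adj w d ∨ G.Adj w e ∨ G.Adj w f)))

include T hnb

/-- near T1 implies no adjacency into T2. -/
lemma adjT2 : ∀ u, nearT G a b c u → ∀ q, (q = d ∨ q = e ∨ q = f) → ¬ G.Adj u q := by
  intro u hu q hq hadj
  rcases nearT_elim hu with hm | ⟨p, hp, hup⟩
  · exact (crossT T u q hm hq).1 hadj
  · exact hnb u ⟨mem3_adj hp hup, mem3_adj hq hadj⟩

/-- near T2 implies no adjacency into T1. -/
lemma adjT1 : ∀ u, nearT G d e f u → ∀ q, (q = a ∨ q = b ∨ q = c) → ¬ G.Adj u q := by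
  intro u hu q hq hadj
  rcases nearT_elim hu with hm | ⟨p, hp, hup⟩
  · exact (crossT T q u hq hm).1 hadj.symm
  · exact hnb u ⟨mem3_adj hq hadj, mem3_adj hp hup⟩

/-- the two closed neighbourhoods are disjoint. -/
lemma nearDisj : ∀ u, nearT G a b c u → nearT G d e f u → False := by
  intro u h1 h2
  rcases nearT_elim h2 with hm | ⟨p, hp, hup⟩
  · rcases nearT_elim h1 with hm' | ⟨q, hq, huq⟩
    · exact (crossT T u u hm' hm).2 rfl
    · exact adjT1 T hnb u (nearT_of_mem hm) q hq huq
  · exact adjT2 T hnb u h1 p hp hup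

include hcog in
/-- no edges between the two closed neighbourhoods. -/
lemma nearNoEdge : ∀ u v, nearT G a b c u → nearT G d e f v → ¬ G.Adj u v := by
  intro u v hu hv huv
  rcases nearT_elim hu with hm | ⟨p, hp, hup⟩
  · exact adjT1 T hnb v hv u hm huv.symm
  · rcases nearT_elim hv with hm' | ⟨q, hq, hvq⟩
    · exact adjT2 T hnb u hu v hm' huv
    · -- p ~ u ~ v ~ q is an induced P4
      have h1 : ¬ G.Adj p v := fun h => adjT2 T hnb v (nearT_of_adj hp h.symm) q hq hvq
      have h2 : ¬ G.Adj p q := (crossT T p q hp hq).1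
      have h3 : ¬ G.Adj u q := adjT2 T hnb u hu q hq
      exact p4free hcog hup.symm huv hvq h1 h2 h3

end NoBridge
end AuxMain

section AuxSide
open SimpleGraph
variable {α : Type*} {G : SimpleGraph α}

lemma nearT_neg {a b c u : α} (h : ¬ nearT G a b c u) :
    (u ≠ a ∧ u ≠ b ∧ u ≠ c) ∧ ¬ G.Adj u a ∧ ¬ G.Adj u b ∧ ¬ G.Adj u c :=
  ⟨⟨fun h' => h (Or.inl h'), fun h' => h (Or.inr (Or.inl h')),
    fun h' => h (Or.inr (Or.inr (Or.inl h')))⟩,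
   fun h' => h (Or.inr (Or.inr (Or.inr (Or.inl h')))),
   fun h' => h (Or.inr (Or.inr (Or.inr (Or.inr (Or.inl h'))))),
   fun h' => h (Or.inr (Or.inr (Or.inr (Or.inr (Or.inr h')))))⟩

/-- Separation: a P3 cannot touch both closed triangle neighbourhoods. -/
lemma sepP3 (hcog : IsCograph G) {a b c d e f x y z : α}
    (T : T2K3 G a b c d e f)
    (hnb : ∀ w, ¬ ((G.Adj w a ∨ G.Adj w b ∨ G.Adj w c) ∧
                   (G.Adj w d ∨ G.Adj w e ∨ G.Adj w f)))
    (P : IP3 G x y z) (h1 : nearT G a b c x) (h2 : nearT G d e f z) : False := by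
  classical
  by_cases hz1 : nearT G a b c z
  · exact nearDisj T hnb z hz1 h2
  by_cases hx2 : nearT G d e f x
  · exact nearDisj T hnb x h1 hx2
  by_cases hy1 : nearT G a b c y
  · exact nearNoEdge hcog T hnb y z hy1 h2 P.hyz
  by_cases hy2 : nearT G d e f y
  · exact nearNoEdge hcog T hnb x y h1 hy2 P.hxy
  rcases nearT_elim h1 with hm | ⟨p, hp, hxp⟩
  · exact hy1 (nearT_of_adj hm P.hxy.symm)
  rcases nearT_elim h2 with hm' | ⟨q, hq, hzq⟩
  · exact hy2 (nearT_of_adj hm' P.hyz)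
  exact p4free hcog hxp.symm P.hxy P.hyz
    (fun h => hy1 (nearT_of_adj hp h.symm))
    (fun h => hz1 (nearT_of_adj hp h.symm))
    P.hxz

/-- A diamond or paw, all four vertices satisfying `N`. -/
def RDP (G : SimpleGraph α) (N : α → Prop) : Prop :=
  (∃ u1 u2 v1 v2, (G.Adj u1 u2 ∧ ¬ G.Adj v1 v2 ∧ v1 ≠ v2 ∧ G.Adj u1 v1 ∧
      G.Adj u1 v2 ∧ G.Adj u2 v1 ∧ G.Adj u2 v2) ∧ N u1 ∧ N u2 ∧ N v1 ∧ N v2) ∨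
  (∃ h s u1 u2, (G.Adj h s ∧ G.Adj h u1 ∧ G.Adj h u2 ∧ G.Adj u1 u2 ∧
      ¬ G.Adj s u1 ∧ ¬ G.Adj s u2 ∧ s ≠ u1 ∧ s ≠ u2) ∧ N h ∧ N s ∧ N u1 ∧ N u2)

lemma caseA {N : α → Prop} {x y z t2 t3 : α} (P : IP3 G x y z)
    (h12 : G.Adj y t2) (h13 : G.Adj y t3) (h23 : G.Adj t2 t3)
    (ruleQ : ∀ w, w ≠ x → w ≠ y → w ≠ z → G.Adj w y → ¬ G.Adj w x ∧ ¬ G.Adj w z)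
    (Nx : N x) (Ny : N y) (Nt2 : N t2) (Nt3 : N t3) : RDP G N := by
  have n2y : t2 ≠ y := h12.ne'
  have n3y : t3 ≠ y := h13.ne'
  have n2x : t2 ≠ x := by
    rintro rfl
    have n3x : t3 ≠ t2 := h23.ne'
    have n3z : t3 ≠ z := by rintro rfl; exact P.hxz h23
    exact (ruleQ t3 n3x n3y n3z h13.symm).1 h23.symm
  have n2z : t2 ≠ z := by
    rintro rfl
    have n3z : t3 ≠ t2 := h23.ne'
    have n3x : t3 ≠ x := by rintro rfl; exact P.hxz h23.symm
    exact (ruleQ t3 n3x n3y n3z h13.symm).2 h23.symm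
  have n3x : t3 ≠ x := by
    rintro rfl
    exact (ruleQ t2 n2x n2y n2z h12.symm).1 h23
  have n3z : t3 ≠ z := by
    rintro rfl
    exact (ruleQ t2 n2x n2y n2z h12.symm).2 h23
  obtain ⟨q2x, q2z⟩ := ruleQ t2 n2x n2y n2z h12.symm
  obtain ⟨q3x, q3z⟩ := ruleQ t3 n3x n3y n3z h13.symm
  exact Or.inr ⟨y, x, t2, t3, ⟨P.hxy.symm, h12, h13, h23,
    fun h => q2x h.symm, fun h => q3x h.symm, n2x.symm, n3x.symm⟩, Ny, Nx, Nt2, Nt3⟩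

lemma caseB {N : α → Prop} {x y z t2 t3 : α} (P : IP3 G x y z)
    (h12 : G.Adj x t2) (h13 : G.Adj x t3) (h23 : G.Adj t2 t3)
    (n2y : t2 ≠ y) (n3y : t3 ≠ y)
    (ruleM : ∀ w, w ≠ x → w ≠ y → w ≠ z → G.Adj w x → G.Adj w z ∧ ¬ G.Adj w y)
    (Nx : N x) (Nz : N z) (Nt2 : N t2) (Nt3 : N t3) : RDP G N := by
  have n2x : t2 ≠ x := h12.ne'
  have n3x : t3 ≠ x := h13.ne'
  have n2z : t2 ≠ z := by rintro rfl; exact P.hxz h12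
  have n3z : t3 ≠ z := by rintro rfl; exact P.hxz h13
  obtain ⟨m2z, -⟩ := ruleM t2 n2x n2y n2z h12.symm
  obtain ⟨m3z, -⟩ := ruleM t3 n3x n3y n3z h13.symm
  exact Or.inl ⟨t2, t3, x, z, ⟨h23, P.hxz, P.nxz, h12.symm, m2z, h13.symm, m3z⟩,
    Nt2, Nt3, Nx, Nz⟩

lemma caseD {N : α → Prop} {x y z t1 t2 t3 : α} (P : IP3 G x y z)
    (h12 : G.Adj t1 t2) (h13 : G.Adj t1 t3) (h23 : G.Adj t2 t3)
    (hyt1 : G.Adj y t1)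
    (n1x : t1 ≠ x) (n1z : t1 ≠ z)
    (n2x : t2 ≠ x) (n2y : t2 ≠ y) (n2z : t2 ≠ z)
    (n3x : t3 ≠ x) (n3y : t3 ≠ y) (n3z : t3 ≠ z)
    (ruleQ : ∀ w, w ≠ x → w ≠ y → w ≠ z → G.Adj w y → ¬ G.Adj w x ∧ ¬ G.Adj w z)
    (Nx : N x) (Ny : N y) (Nt1 : N t1) (Nt2 : N t2) (Nt3 : N t3) : RDP G N := by
  classical
  have n1y : t1 ≠ y := hyt1.ne'
  obtain ⟨q1x, q1z⟩ := ruleQ t1 n1x n1y n1z hyt1.symm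
  by_cases h2y : G.Adj t2 y
  · obtain ⟨q2x, q2z⟩ := ruleQ t2 n2x n2y n2z h2y
    exact Or.inr ⟨y, x, t1, t2, ⟨P.hxy.symm, hyt1, h2y.symm, h12,
      fun h => q1x h.symm, fun h => q2x h.symm, n1x.symm, n2x.symm⟩, Ny, Nx, Nt1, Nt2⟩
  by_cases h3y : G.Adj t3 y
  · obtain ⟨q3x, q3z⟩ := ruleQ t3 n3x n3y n3z h3y
    exact Or.inr ⟨y, x, t1, t3, ⟨P.hxy.symm, hyt1, h3y.symm, h13,
      fun h => q1x h.symm, fun h => q3x h.symm, n1x.symm, n3x.symm⟩, Ny, Nx, Nt1, Nt3⟩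
  · exact Or.inr ⟨t1, y, t2, t3, ⟨hyt1.symm, h12, h13, h23,
      fun h => h2y h.symm, fun h => h3y h.symm, n2y.symm, n3y.symm⟩, Nt1, Ny, Nt2, Nt3⟩

lemma caseE (hcog : IsCograph G) {N : α → Prop} {x y z t1 t2 : α} (P : IP3 G x y z)
    (h12 : G.Adj t1 t2) (hxt1 : G.Adj x t1)
    (hy1 : ¬ G.Adj y t1) (hy2 : ¬ G.Adj y t2)
    (n1y : t1 ≠ y) (n1z : t1 ≠ z)
    (n2x : t2 ≠ x) (n2y : t2 ≠ y) (n2z : t2 ≠ z)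
    (ruleM : ∀ w, w ≠ x → w ≠ y → w ≠ z → G.Adj w x → G.Adj w z ∧ ¬ G.Adj w y)
    (Nx : N x) (Nz : N z) (Nt1 : N t1) (Nt2 : N t2) : RDP G N := by
  classical
  have n1x : t1 ≠ x := hxt1.ne'
  obtain ⟨m1z, -⟩ := ruleM t1 n1x n1y n1z hxt1.symm
  by_cases h2x : G.Adj t2 x
  · obtain ⟨m2z, -⟩ := ruleM t2 n2x n2y n2z h2x
    exact Or.inl ⟨t1, t2, x, z, ⟨h12, P.hxz, P.nxz, hxt1.symm, m1z, h2x, m2z⟩,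
      Nt1, Nt2, Nx, Nz⟩
  · exact (p4free hcog P.hxy.symm hxt1 h12 hy1 hy2 (fun h => h2x h.symm)).elim

/-- Main one-sided lemma: if the P3 avoids `N[T2]` and touches `N[T1]`,
we get a `K3 ∪ diamond` or `K3 ∪ paw`. -/
lemma main_side (hcog : IsCograph G) {a b c d e f x y z : α}
    (T : T2K3 G a b c d e f)
    (hnb : ∀ w, ¬ ((G.Adj w a ∨ G.Adj w b ∨ G.Adj w c) ∧
                   (G.Adj w d ∨ G.Adj w e ∨ G.Adj w f)))
    (P : IP3 G x y z)
    (hx2 : ¬ nearT G d e f x) (hy2 : ¬ nearT G d e f y) (hz2 : ¬ nearT G d e f z)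
    (hp : nearT G a b c x ∨ nearT G a b c y ∨ nearT G a b c z) :
    Nonempty ((gUnion (KG 3) diamond) ↪g G) ∨ Nonempty ((gUnion (KG 3) paw) ↪g G) := by
  classical
  have Nt : ∀ u, (u = a ∨ u = b ∨ u = c) → ¬ nearT G d e f u := by
    intro u hu hnear
    exact nearDisj T hnb u (nearT_of_mem hu) hnear
  have finish : RDP G (fun u => ¬ nearT G d e f u) →
      Nonempty ((gUnion (KG 3) diamond) ↪g G) ∨ Nonempty ((gUnion (KG 3) paw) ↪g G) := by
    rintro (⟨u1, u2, v1, v2, ⟨d1, d2, d3, d4, d5, d6, d7⟩, N1, N2, N3, N4⟩ |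
            ⟨h, s, u1, u2, ⟨p1, p2, p3, p4, p5, p6, p7, p8⟩, N1, N2, N3, N4⟩)
    · obtain ⟨⟨e1, e2, e3⟩, a1, a2, a3⟩ := nearT_neg N1
      obtain ⟨⟨e4, e5, e6⟩, a4, a5, a6⟩ := nearT_neg N2
      obtain ⟨⟨e7, e8, e9⟩, a7, a8, a9⟩ := nearT_neg N3
      obtain ⟨⟨e10, e11, e12⟩, a10, a11, a12⟩ := nearT_neg N4
      exact Or.inl (cons2 d e f u1 u2 v1 v2 T.hde T.hdf T.hef d1 d2 d3 d4 d5 d6 d7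
        a1 a2 a3 a4 a5 a6 a7 a8 a9 a10 a11 a12
        e1 e2 e3 e4 e5 e6 e7 e8 e9 e10 e11 e12)
    · obtain ⟨⟨e1, e2, e3⟩, a1, a2, a3⟩ := nearT_neg N1
      obtain ⟨⟨e4, e5, e6⟩, a4, a5, a6⟩ := nearT_neg N2
      obtain ⟨⟨e7, e8, e9⟩, a7, a8, a9⟩ := nearT_neg N3
      obtain ⟨⟨e10, e11, e12⟩, a10, a11, a12⟩ := nearT_neg N4
      exact Or.inr (cons3 d e f h s u1 u2 T.hde T.hdf T.hef p1 p2 p3 p4 p5 p6 p7 p8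
        a1 a2 a3 a4 a5 a6 a7 a8 a9 a10 a11 a12
        e1 e2 e3 e4 e5 e6 e7 e8 e9 e10 e11 e12)
  by_cases hex : ∃ w, w ≠ x ∧ w ≠ y ∧ w ≠ z ∧ G.Adj w y ∧ (G.Adj w x ∨ G.Adj w z)
  · obtain ⟨w, nwx, nwy, nwz, hwy, hwxz⟩ := hex
    have Nw : ¬ nearT G d e f w := by
      intro hw
      rcases nearT_elim hw with hm | ⟨q, hq, hwq⟩
      · exact hy2 (nearT_of_adj hm hwy.symm)
      · have hwx : G.Adj w x := by
          by_contra hwx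
          exact p4free hcog hwq.symm hwy P.hxy.symm
            (fun h => hy2 (nearT_of_adj hq h.symm))
            (fun h => hx2 (nearT_of_adj hq h.symm)) hwx
        have hwz : G.Adj w z := by
          by_contra hwz
          exact p4free hcog hwq.symm hwy P.hyz
            (fun h => hy2 (nearT_of_adj hq h.symm))
            (fun h => hz2 (nearT_of_adj hq h.symm)) hwz
        have key : ∀ p, nearT G a b c p → ¬ nearT G d e f p → G.Adj w p → False := by
          intro p hnear hp2 hwp
          rcases nearT_elim hnear with hm' | ⟨r, hr, hpr⟩
          · exact hnb w ⟨mem3_adj hm' hwp, mem3_adj hq hwq⟩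
          · exact p4free hcog hpr.symm hwp.symm hwq
              (fun h => hnb w ⟨mem3_adj hr h.symm, mem3_adj hq hwq⟩)
              ((crossT T r q hr hq).1)
              (fun h => hp2 (nearT_of_adj hq h))
        rcases hp with h | h | h
        exacts [key x h hx2 hwx, key y h hy2 hwy, key z h hz2 hwz]
    rcases hwxz with hwx | hwz
    · by_cases hwz : G.Adj w z
      · exact finish (Or.inl ⟨w, y, x, z, ⟨hwy, P.hxz, P.nxz, hwx, hwz, P.hxy.symm, P.hyz⟩,
          Nw, hy2, hx2, hz2⟩)
      · exact finish (Or.inr ⟨y, z, w, x, ⟨P.hyz, hwy.symm, P.hxy.symm, hwx,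
          fun h => hwz h.symm, fun h => P.hxz h.symm, nwz.symm, P.nxz.symm⟩,
          hy2, hz2, Nw, hx2⟩)
    · by_cases hwx : G.Adj w x
      · exact finish (Or.inl ⟨w, y, x, z, ⟨hwy, P.hxz, P.nxz, hwx, hwz, P.hxy.symm, P.hyz⟩,
          Nw, hy2, hx2, hz2⟩)
      · exact finish (Or.inr ⟨y, x, w, z, ⟨P.hxy.symm, hwy.symm, P.hyz, hwz,
          fun h => hwx h.symm, P.hxz, nwx.symm, P.nxz⟩,
          hy2, hx2, Nw, hz2⟩)
  · have ruleQ : ∀ w, w ≠ x → w ≠ y → w ≠ z → G.Adj w y → ¬ G.Adj w x ∧ ¬ G.Adj w z :=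
      fun w h1 h2 h3 h4 =>
        ⟨fun h5 => hex ⟨w, h1, h2, h3, h4, Or.inl h5⟩,
         fun h5 => hex ⟨w, h1, h2, h3, h4, Or.inr h5⟩⟩
    have ruleMx : ∀ w, w ≠ x → w ≠ y → w ≠ z → G.Adj w x → G.Adj w z ∧ ¬ G.Adj w y := by
      intro w h1 h2 h3 h4
      have hwy : ¬ G.Adj w y := fun h5 => (ruleQ w h1 h2 h3 h5).1 h4
      refine ⟨?_, hwy⟩
      by_contra h5
      exact p4free hcog h4 P.hxy P.hyz hwy h5 P.hxz
    have ruleMz : ∀ w, w ≠ z → w ≠ y → w ≠ x → G.Adj w z → G.Adj w x ∧ ¬ G.Adj w y := by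
      intro w h1 h2 h3 h4
      have hwy : ¬ G.Adj w y := fun h5 => (ruleQ w h3 h2 h1 h5).2 h4
      refine ⟨?_, hwy⟩
      by_contra h5
      exact p4free hcog h4 P.hyz.symm P.hxy.symm hwy h5 (fun h => P.hxz h.symm)
    by_cases hyT : y = a ∨ y = b ∨ y = c
    · rcases hyT with rfl | rfl | rfl
      · exact finish (caseA P T.hab T.hac T.hbc ruleQ hx2 hy2
          (Nt b (Or.inr (Or.inl rfl))) (Nt c (Or.inr (Or.inr rfl))))
      · exact finish (caseA P T.hab.symm T.hbc T.hac ruleQ hx2 hy2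
          (Nt a (Or.inl rfl)) (Nt c (Or.inr (Or.inr rfl))))
      · exact finish (caseA P T.hac.symm T.hbc.symm T.hab ruleQ hx2 hy2
          (Nt a (Or.inl rfl)) (Nt b (Or.inr (Or.inl rfl))))
    by_cases hxT : x = a ∨ x = b ∨ x = c
    · have nya : y ≠ a := fun h => hyT (Or.inl h)
      have nyb : y ≠ b := fun h => hyT (Or.inr (Or.inl h))
      have nyc : y ≠ c := fun h => hyT (Or.inr (Or.inr h))
      rcases hxT with rfl | rfl | rfl
      · exact finish (caseB P T.hab T.hac T.hbc nyb.symm nyc.symm ruleMx hx2 hz2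
          (Nt b (Or.inr (Or.inl rfl))) (Nt c (Or.inr (Or.inr rfl))))
      · exact finish (caseB P T.hab.symm T.hbc T.hac nya.symm nyc.symm ruleMx hx2 hz2
          (Nt a (Or.inl rfl)) (Nt c (Or.inr (Or.inr rfl))))
      · exact finish (caseB P T.hac.symm T.hbc.symm T.hab nya.symm nyb.symm ruleMx hx2 hz2
          (Nt a (Or.inl rfl)) (Nt b (Or.inr (Or.inl rfl))))
    by_cases hzT : z = a ∨ z = b ∨ z = c
    · have nya : y ≠ a := fun h => hyT (Or.inl h)
      have nyb : y ≠ b := fun h => hyT (Or.inr (Or.inl h))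
      have nyc : y ≠ c := fun h => hyT (Or.inr (Or.inr h))
      have ruleMz' : ∀ w, w ≠ z → w ≠ y → w ≠ x → G.Adj w z → G.Adj w x ∧ ¬ G.Adj w y :=
        ruleMz
      rcases hzT with rfl | rfl | rfl
      · exact finish (caseB P.symm T.hab T.hac T.hbc nyb.symm nyc.symm ruleMz' hz2 hx2
          (Nt b (Or.inr (Or.inl rfl))) (Nt c (Or.inr (Or.inr rfl))))
      · exact finish (caseB P.symm T.hab.symm T.hbc T.hac nya.symm nyc.symm ruleMz' hz2 hx2
          (Nt a (Or.inl rfl)) (Nt c (Or.inr (Or.inr rfl))))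
      · exact finish (caseB P.symm T.hac.symm T.hbc.symm T.hab nya.symm nyb.symm ruleMz' hz2 hx2
          (Nt a (Or.inl rfl)) (Nt b (Or.inr (Or.inl rfl))))
    have nax : a ≠ x := fun h => hxT (Or.inl h.symm)
    have nbx : b ≠ x := fun h => hxT (Or.inr (Or.inl h.symm))
    have ncx : c ≠ x := fun h => hxT (Or.inr (Or.inr h.symm))
    have nay : a ≠ y := fun h => hyT (Or.inl h.symm)
    have nby : b ≠ y := fun h => hyT (Or.inr (Or.inl h.symm))
    have ncy : c ≠ y := fun h => hyT (Or.inr (Or.inr h.symm))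
    have naz : a ≠ z := fun h => hzT (Or.inl h.symm)
    have nbz : b ≠ z := fun h => hzT (Or.inr (Or.inl h.symm))
    have ncz : c ≠ z := fun h => hzT (Or.inr (Or.inr h.symm))
    by_cases hyA : G.Adj y a ∨ G.Adj y b ∨ G.Adj y c
    · rcases hyA with h | h | h
      · exact finish (caseD P T.hab T.hac T.hbc h nax naz nbx nby nbz ncx ncy ncz
          ruleQ hx2 hy2 (Nt a (Or.inl rfl)) (Nt b (Or.inr (Or.inl rfl)))
          (Nt c (Or.inr (Or.inr rfl))))
      · exact finish (caseD P T.hab.symm T.hbc T.hac h nbx nbz nax nay naz ncx ncy ncz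
          ruleQ hx2 hy2 (Nt b (Or.inr (Or.inl rfl))) (Nt a (Or.inl rfl))
          (Nt c (Or.inr (Or.inr rfl))))
      · exact finish (caseD P T.hac.symm T.hbc.symm T.hab h ncx ncz nax nay naz nbx nby nbz
          ruleQ hx2 hy2 (Nt c (Or.inr (Or.inr rfl))) (Nt a (Or.inl rfl))
          (Nt b (Or.inr (Or.inl rfl))))
    have hya : ¬ G.Adj y a := fun h => hyA (Or.inl h)
    have hyb : ¬ G.Adj y b := fun h => hyA (Or.inr (Or.inl h))
    have hyc : ¬ G.Adj y c := fun h => hyA (Or.inr (Or.inr h))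
    by_cases hxA : G.Adj x a ∨ G.Adj x b ∨ G.Adj x c
    · rcases hxA with h | h | h
      · exact finish (caseE hcog P T.hab h hya hyb nay naz nbx nby nbz ruleMx hx2 hz2
          (Nt a (Or.inl rfl)) (Nt b (Or.inr (Or.inl rfl))))
      · exact finish (caseE hcog P T.hbc h hyb hyc nby nbz ncx ncy ncz ruleMx hx2 hz2
          (Nt b (Or.inr (Or.inl rfl))) (Nt c (Or.inr (Or.inr rfl))))
      · exact finish (caseE hcog P T.hac.symm h hyc hya ncy ncz nax nay naz ruleMx hx2 hz2
          (Nt c (Or.inr (Or.inr rfl))) (Nt a (Or.inl rfl)))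
    by_cases hzA : G.Adj z a ∨ G.Adj z b ∨ G.Adj z c
    · have ruleMz' : ∀ w, w ≠ z → w ≠ y → w ≠ x → G.Adj w z → G.Adj w x ∧ ¬ G.Adj w y :=
        ruleMz
      rcases hzA with h | h | h
      · exact finish (caseE hcog P.symm T.hab h hya hyb nay nax nbz nby nbx ruleMz' hz2 hx2
          (Nt a (Or.inl rfl)) (Nt b (Or.inr (Or.inl rfl))))
      · exact finish (caseE hcog P.symm T.hbc h hyb hyc nby nbx ncz ncy ncx ruleMz' hz2 hx2
          (Nt b (Or.inr (Or.inl rfl))) (Nt c (Or.inr (Or.inr rfl))))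
      · exact finish (caseE hcog P.symm T.hac.symm h hyc hya ncy ncx naz nay nax ruleMz' hz2 hx2
          (Nt c (Or.inr (Or.inr rfl))) (Nt a (Or.inl rfl)))
    · exfalso
      have hxa : ¬ G.Adj x a := fun h => hxA (Or.inl h)
      have hxb : ¬ G.Adj x b := fun h => hxA (Or.inr (Or.inl h))
      have hxc : ¬ G.Adj x c := fun h => hxA (Or.inr (Or.inr h))
      have hza : ¬ G.Adj z a := fun h => hzA (Or.inl h)
      have hzb : ¬ G.Adj z b := fun h => hzA (Or.inr (Or.inl h))
      have hzc : ¬ G.Adj z c := fun h => hzA (Or.inr (Or.inr h))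
      rcases hp with h | h | h <;> rcases h with h | h | h | h | h | h <;>
        first
          | exact hxT (Or.inl h)
          | exact hxT (Or.inr (Or.inl h))
          | exact hxT (Or.inr (Or.inr h))
          | exact hyT (Or.inl h)
          | exact hyT (Or.inr (Or.inl h))
          | exact hyT (Or.inr (Or.inr h))
          | exact hzT (Or.inl h)
          | exact hzT (Or.inr (Or.inl h))
          | exact hzT (Or.inr (Or.inr h))
          | exact hxa h
          | exact hxb h
          | exact hxc h
          | exact hya h
          | exact hyb h
          | exact hyc h
          | exact hza h
          | exact hzb h
          | exact hzc h

end AuxSide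

section FinalAux
open SimpleGraph
variable {α : Type*} {G : SimpleGraph α}

lemma extractT2K3 (e2 : twoK3 ↪g G) :
    T2K3 G (e2 (.inl 0)) (e2 (.inl 1)) (e2 (.inl 2))
      (e2 (.inr 0)) (e2 (.inr 1)) (e2 (.inr 2)) := by
  refine ⟨e2.map_rel_iff.mpr ((twoK3_adj_ll 0 1).mpr (by decide)),
    e2.map_rel_iff.mpr ((twoK3_adj_ll 0 2).mpr (by decide)),
    e2.map_rel_iff.mpr ((twoK3_adj_ll 1 2).mpr (by decide)),
    e2.map_rel_iff.mpr ((twoK3_adj_rr 0 1).mpr (by decide)),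
    e2.map_rel_iff.mpr ((twoK3_adj_rr 0 2).mpr (by decide)),
    e2.map_rel_iff.mpr ((twoK3_adj_rr 1 2).mpr (by decide)),
    fun h => (twoK3_adj_lr 0 0).mp (e2.map_rel_iff.mp h),
    fun h => (twoK3_adj_lr 0 1).mp (e2.map_rel_iff.mp h),
    fun h => (twoK3_adj_lr 0 2).mp (e2.map_rel_iff.mp h),
    fun h => (twoK3_adj_lr 1 0).mp (e2.map_rel_iff.mp h),
    fun h => (twoK3_adj_lr 1 1).mp (e2.map_rel_iff.mp h),
    fun h => (twoK3_adj_lr 1 2).mp (e2.map_rel_iff.mp h),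
    fun h => (twoK3_adj_lr 2 0).mp (e2.map_rel_iff.mp h),
    fun h => (twoK3_adj_lr 2 1).mp (e2.map_rel_iff.mp h),
    fun h => (twoK3_adj_lr 2 2).mp (e2.map_rel_iff.mp h),
    e2.injective.ne (by decide), e2.injective.ne (by decide),
    e2.injective.ne (by decide), e2.injective.ne (by decide),
    e2.injective.ne (by decide), e2.injective.ne (by decide),
    e2.injective.ne (by decide), e2.injective.ne (by decide),
    e2.injective.ne (by decide)⟩

lemma extractIP3 (e3 : pathGraph 3 ↪g G) : IP3 G (e3 0) (e3 1) (e3 2) := by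
  have pa01 : (pathGraph 3).Adj 0 1 := by simp [pathGraph_adj]
  have pa12 : (pathGraph 3).Adj 1 2 := by simp [pathGraph_adj]
  have pa02 : ¬ (pathGraph 3).Adj 0 2 := by simp [pathGraph_adj]
  exact ⟨e3.map_rel_iff.mpr pa01, e3.map_rel_iff.mpr pa12,
    fun h => pa02 (e3.map_rel_iff.mp h), e3.injective.ne (by decide)⟩

/-- Full combined lemma, vertex-level. -/
lemma combined (hcog : IsCograph G) {a b c d e f x y z : α}
    (T : T2K3 G a b c d e f) (P : IP3 G x y z) :
    Nonempty ((gUnion twoK3 (pathGraph 3)) ↪g G) ∨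
      Nonempty ((gUnion (KG 3) diamond) ↪g G) ∨
      Nonempty ((gUnion (KG 3) paw) ↪g G) ∨
      Nonempty ((gJoin (KG 1) twoK3) ↪g G) := by
  classical
  by_cases hbr : ∃ w, (G.Adj w a ∨ G.Adj w b ∨ G.Adj w c) ∧
      (G.Adj w d ∨ G.Adj w e ∨ G.Adj w f)
  · obtain ⟨w, h1, h2⟩ := hbr
    refine Or.inr (Or.inr (Or.inr ?_))
    rcases h1 with h1 | h1 | h1 <;> rcases h2 with h2 | h2 | h2
    · exact bridge hcog T w h1 h2
    · exact bridge hcog T.rot2 w h1 h2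
    · exact bridge hcog T.rot2.rot2 w h1 h2
    · exact bridge hcog T.rot1 w h1 h2
    · exact bridge hcog T.rot1.rot2 w h1 h2
    · exact bridge hcog T.rot1.rot2.rot2 w h1 h2
    · exact bridge hcog T.rot1.rot1 w h1 h2
    · exact bridge hcog T.rot1.rot1.rot2 w h1 h2
    · exact bridge hcog T.rot1.rot1.rot2.rot2 w h1 h2
  · have hnb : ∀ w, ¬ ((G.Adj w a ∨ G.Adj w b ∨ G.Adj w c) ∧
        (G.Adj w d ∨ G.Adj w e ∨ G.Adj w f)) := fun w hh => hbr ⟨w, hh⟩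
    by_cases h1 : nearT G a b c x ∨ nearT G a b c y ∨ nearT G a b c z
    · have trio : ¬ nearT G d e f x ∧ ¬ nearT G d e f y ∧ ¬ nearT G d e f z := by
        rcases h1 with h | h | h
        · exact ⟨fun h2 => nearDisj T hnb x h h2,
                 fun h2 => nearNoEdge hcog T hnb x y h h2 P.hxy,
                 fun h2 => sepP3 hcog T hnb P h h2⟩
        · exact ⟨fun h2 => nearNoEdge hcog T hnb y x h h2 P.hxy.symm,
                 fun h2 => nearDisj T hnb y h h2,
                 fun h2 => nearNoEdge hcog T hnb y z h h2 P.hyz⟩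
        · exact ⟨fun h2 => sepP3 hcog T hnb P.symm h h2,
                 fun h2 => nearNoEdge hcog T hnb z y h h2 P.hyz.symm,
                 fun h2 => nearDisj T hnb z h h2⟩
      rcases main_side hcog T hnb P trio.1 trio.2.1 trio.2.2 h1 with o | o
      · exact Or.inr (Or.inl o)
      · exact Or.inr (Or.inr (Or.inl o))
    · have h1x : ¬ nearT G a b c x := fun h => h1 (Or.inl h)
      have h1y : ¬ nearT G a b c y := fun h => h1 (Or.inr (Or.inl h))
      have h1z : ¬ nearT G a b c z := fun h => h1 (Or.inr (Or.inr h))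
      by_cases h2 : nearT G d e f x ∨ nearT G d e f y ∨ nearT G d e f z
      · have hnb' : ∀ w, ¬ ((G.Adj w d ∨ G.Adj w e ∨ G.Adj w f) ∧
            (G.Adj w a ∨ G.Adj w b ∨ G.Adj w c)) := fun w hh => hnb w ⟨hh.2, hh.1⟩
        rcases main_side hcog T.swap hnb' P h1x h1y h1z h2 with o | o
        · exact Or.inr (Or.inl o)
        · exact Or.inr (Or.inr (Or.inl o))
      · have h2x : ¬ nearT G d e f x := fun h => h2 (Or.inl h)
        have h2y : ¬ nearT G d e f y := fun h => h2 (Or.inr (Or.inl h))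
        have h2z : ¬ nearT G d e f z := fun h => h2 (Or.inr (Or.inr h))
        obtain ⟨⟨mxa, mxb, mxc⟩, qxa, qxb, qxc⟩ := nearT_neg h1x
        obtain ⟨⟨mya, myb, myc⟩, qya, qyb, qyc⟩ := nearT_neg h1y
        obtain ⟨⟨mza, mzb, mzc⟩, qza, qzb, qzc⟩ := nearT_neg h1z
        obtain ⟨⟨mxd, mxe, mxf⟩, qxd, qxe, qxf⟩ := nearT_neg h2x
        obtain ⟨⟨myd, mye, myf⟩, qyd, qye, qyf⟩ := nearT_neg h2y
        obtain ⟨⟨mzd, mze, mzf⟩, qzd, qze, qzf⟩ := nearT_neg h2z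
        exact Or.inl (cons1 a b c d e f x y z T.hab T.hac T.hbc T.hde T.hdf T.hef
          T.had T.hae T.haf T.hbd T.hbe T.hbf T.hcd T.hce T.hcf
          T.nad T.nae T.naf T.nbd T.nbe T.nbf T.ncd T.nce T.ncf
          P.hxy P.hyz P.hxz P.nxz
          (fun h => qxa h.symm) (fun h => qya h.symm) (fun h => qza h.symm)
          (fun h => qxb h.symm) (fun h => qyb h.symm) (fun h => qzb h.symm)
          (fun h => qxc h.symm) (fun h => qyc h.symm) (fun h => qzc h.symm)
          mxa.symm mya.symm mza.symm mxb.symm myb.symm mzb.symm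
          mxc.symm myc.symm mzc.symm
          (fun h => qxd h.symm) (fun h => qyd h.symm) (fun h => qzd h.symm)
          (fun h => qxe h.symm) (fun h => qye h.symm) (fun h => qze h.symm)
          (fun h => qxf h.symm) (fun h => qyf h.symm) (fun h => qzf h.symm)
          mxd.symm myd.symm mzd.symm mxe.symm mye.symm mze.symm
          mxf.symm myf.symm mzf.symm)

end FinalAux


theorem stmt_3 {α : Type*} [Fintype α] (G : SimpleGraph α) (hcog : IsCograph G)
    (hP3 : Contains G (pathGraph 3)) (h2K3 : Contains G twoK3) :
    Contains G (gUnion twoK3 (pathGraph 3)) ∨ Contains G (gUnion (KG 3) diamond) ∨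
      Contains G (gUnion (KG 3) paw) ∨ Contains G (gJoin (KG 1) twoK3) := by
  obtain ⟨e2⟩ := (h2K3 : Nonempty (twoK3 ↪g G))
  obtain ⟨e3⟩ := (hP3 : Nonempty (pathGraph 3 ↪g G))
  exact combined hcog (extractT2K3 e2) (extractIP3 e3)
end

section
/- A cograph G is (1,2)-partitionable if and only if G contains none of the following three graphs as an induced subgraph: the complement of 3K2 (equivalently, 2K1 ⊕ 2K1 ⊕ 2K1, the octahedron), 2K2 ⊕ 2K1, and 2K3. -/
open SimpleGraph

def octahedron := gJoin (EG 2) (gJoin (EG 2) (EG 2))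

section Emb
variable {α β γ : Type*} {G : SimpleGraph α} {H1 : SimpleGraph β} {H2 : SimpleGraph γ}

noncomputable def gJoin_embed (f1 : H1 ↪g G) (f2 : H2 ↪g G)
    (h : ∀ u v, G.Adj (f1 u) (f2 v)) : gJoin H1 H2 ↪g G := by
  refine ⟨⟨Sum.elim f1 f2, ?_⟩, ?_⟩
  · rintro (u|u) (v|v) huv <;> simp only [Sum.elim_inl, Sum.elim_inr] at huv
    · simp_all [f1.injective huv]
    · exact absurd (huv ▸ h u v) (G.irrefl)
    · exact absurd (huv ▸ (h v u).symm) (G.irrefl)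
    · simp_all [f2.injective huv]
  · rintro (u|u) (v|v)
    · exact f1.map_rel_iff
    · exact iff_of_true (h u v) trivial
    · exact iff_of_true (h v u).symm trivial
    · exact f2.map_rel_iff

@[simp] lemma gJoin_embed_apply (f1 : H1 ↪g G) (f2 : H2 ↪g G)
    (h : ∀ u v, G.Adj (f1 u) (f2 v)) (x : β ⊕ γ) :
    gJoin_embed f1 f2 h x = Sum.elim f1 f2 x := rfl

noncomputable def gUnion_embed (f1 : H1 ↪g G) (f2 : H2 ↪g G)
    (hne : ∀ u v, f1 u ≠ f2 v) (h : ∀ u v, ¬ G.Adj (f1 u) (f2 v)) :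
    gUnion H1 H2 ↪g G := by
  refine ⟨⟨Sum.elim f1 f2, ?_⟩, ?_⟩
  · rintro (u|u) (v|v) huv <;> simp only [Sum.elim_inl, Sum.elim_inr] at huv
    · simp_all [f1.injective huv]
    · exact absurd huv (hne u v)
    · exact absurd huv.symm (hne v u)
    · simp_all [f2.injective huv]
  · rintro (u|u) (v|v)
    · exact f1.map_rel_iff
    · exact iff_of_false (h u v) id
    · simp only [gUnion, Sum.elim_inl, Sum.elim_inr]
      exact iff_of_false (fun hh => h v u hh.symm) id
    · exact f2.map_rel_iff

@[simp] lemma gUnion_embed_apply (f1 : H1 ↪g G) (f2 : H2 ↪g G)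
    (hne : ∀ u v, f1 u ≠ f2 v) (h : ∀ u v, ¬ G.Adj (f1 u) (f2 v)) (x : β ⊕ γ) :
    gUnion_embed f1 f2 hne h x = Sum.elim f1 f2 x := rfl

noncomputable def embed_pair {a b : α} (hne : a ≠ b) (hn : ¬ G.Adj a b) : EG 2 ↪g G := by
  have hn' : ¬ G.Adj b a := fun hh => hn hh.symm
  refine ⟨⟨![a, b], ?_⟩, ?_⟩
  · intro u v huv
    fin_cases u <;> fin_cases v <;> simp_all [hne, hne.symm]
  · intro u v
    show G.Adj (![a, b] u) (![a, b] v) ↔ _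
    fin_cases u <;> fin_cases v <;>
      simp_all [EG, G.irrefl, hn, hn']

@[simp] lemma embed_pair_apply {a b : α} (hne : a ≠ b) (hn : ¬ G.Adj a b) (i : Fin 2) :
    embed_pair hne hn i = ![a, b] i := rfl

noncomputable def embed_edge {a b : α} (h : G.Adj a b) : KG 2 ↪g G := by
  have hne := h.ne
  refine ⟨⟨![a, b], ?_⟩, ?_⟩
  · intro u v huv
    fin_cases u <;> fin_cases v <;> simp_all [hne, hne.symm]
  · intro u v
    show G.Adj (![a, b] u) (![a, b] v) ↔ _
    fin_cases u <;> fin_cases v <;>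
      simp_all [KG, G.irrefl, h, h.symm, hne, hne.symm]

@[simp] lemma embed_edge_apply {a b : α} (h : G.Adj a b) (i : Fin 2) :
    embed_edge h i = ![a, b] i := rfl

noncomputable def embed_tri {a b c : α} (hab : G.Adj a b) (hac : G.Adj a c) (hbc : G.Adj b c) :
    KG 3 ↪g G := by
  refine ⟨⟨![a, b, c], ?_⟩, ?_⟩
  · intro u v huv
    fin_cases u <;> fin_cases v <;>
      simp_all [hab.ne, hab.ne.symm, hac.ne, hac.ne.symm, hbc.ne, hbc.ne.symm]
  · intro u v
    show G.Adj (![a, b, c] u) (![a, b, c] v) ↔ _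
    fin_cases u <;> fin_cases v <;>
      simp_all [KG, G.irrefl, hab, hab.symm, hac, hac.symm, hbc, hbc.symm,
        hab.ne, hab.ne.symm, hac.ne, hac.ne.symm, hbc.ne, hbc.ne.symm]

@[simp] lemma embed_tri_apply {a b c : α} (hab : G.Adj a b) (hac : G.Adj a c) (hbc : G.Adj b c)
    (i : Fin 3) : embed_tri hab hac hbc i = ![a, b, c] i := rfl

end Emb
section Pat
variable {α : Type*} {G : SimpleGraph α}

lemma contains_P4 {a b c d : α} (hab : G.Adj a b) (hbc : G.Adj b c) (hcd : G.Adj c d)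
    (hac : ¬ G.Adj a c) (had : ¬ G.Adj a d) (hbd : ¬ G.Adj b d) :
    Contains G (pathGraph 4) := by
  have hac' : a ≠ c := fun h => by subst h; exact had hcd
  have had' : a ≠ d := fun h => by subst h; exact hac hcd.symm
  have hbd' : b ≠ d := fun h => by subst h; exact had hab
  have hca : ¬ G.Adj c a := fun h => hac h.symm
  have hda : ¬ G.Adj d a := fun h => had h.symm
  have hdb : ¬ G.Adj d b := fun h => hbd h.symm
  refine ⟨⟨![a, b, c, d], ?_⟩, ?_⟩
  · intro u v huv
    fin_cases u <;> fin_cases v <;>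
      simp_all [hab.ne, hab.ne.symm, hbc.ne, hbc.ne.symm, hcd.ne, hcd.ne.symm,
        hac', hac'.symm, had', had'.symm, hbd', hbd'.symm]
  · intro u v
    show G.Adj (![a, b, c, d] u) (![a, b, c, d] v) ↔ _
    fin_cases u <;> fin_cases v <;>
      simp_all [pathGraph_adj, G.irrefl, hab, hab.symm, hbc, hbc.symm, hcd, hcd.symm] <;>
      decide

lemma contains_oct {a1 a2 b1 b2 c1 c2 : α} (ha : a1 ≠ a2) (hb : b1 ≠ b2) (hc : c1 ≠ c2)
    (hna : ¬ G.Adj a1 a2) (hnb : ¬ G.Adj b1 b2) (hnc : ¬ G.Adj c1 c2)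
    (hab : ∀ i j, G.Adj (![a1,a2] i) (![b1,b2] j))
    (hac : ∀ i j, G.Adj (![a1,a2] i) (![c1,c2] j))
    (hbc : ∀ i j, G.Adj (![b1,b2] i) (![c1,c2] j)) :
    Contains G octahedron := by
  refine ⟨gJoin_embed (embed_pair ha hna)
    (gJoin_embed (embed_pair hb hnb) (embed_pair hc hnc) ?_) ?_⟩
  · intro u v
    simpa using hbc u v
  · rintro u (v|v) <;> simp [hab u v, hac u v]

lemma contains_joinK2 {a1 a2 b1 b2 e1 e2 : α}
    (he : e1 ≠ e2) (hne : ¬ G.Adj e1 e2)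
    (ha : G.Adj a1 a2) (hb : G.Adj b1 b2)
    (hd : ∀ i j, ![a1,a2] i ≠ ![b1,b2] j)
    (hnab : ∀ i j, ¬ G.Adj (![a1,a2] i) (![b1,b2] j))
    (hea : ∀ i j, G.Adj (Sum.elim ![a1,a2] ![b1,b2] i) (![e1,e2] j)) :
    Contains G (gJoin twoK2 (EG 2)) := by
  refine ⟨gJoin_embed (gUnion_embed (embed_edge ha) (embed_edge hb) ?_ ?_)
    (embed_pair he hne) ?_⟩
  · intro u v; simpa using hd u v
  · intro u v; simpa using hnab u v
  · intro x v; exact hea x v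

lemma contains_twoK3 {a1 a2 a3 b1 b2 b3 : α}
    (h12 : G.Adj a1 a2) (h13 : G.Adj a1 a3) (h23 : G.Adj a2 a3)
    (g12 : G.Adj b1 b2) (g13 : G.Adj b1 b3) (g23 : G.Adj b2 b3)
    (hd : ∀ i j, ![a1,a2,a3] i ≠ ![b1,b2,b3] j)
    (hn : ∀ i j, ¬ G.Adj (![a1,a2,a3] i) (![b1,b2,b3] j)) :
    Contains G twoK3 := by
  refine ⟨gUnion_embed (embed_tri h12 h13 h23) (embed_tri g12 g13 g23) ?_ ?_⟩
  · intro u v; simpa using hd u v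
  · intro u v; simpa using hn u v

end Pat
section Sein
open Finset
variable {α : Type*} [DecidableEq α] (G : SimpleGraph α)

def NoE (A B : Finset α) : Prop := ∀ ⦃a⦄, a ∈ A → ∀ ⦃b⦄, b ∈ B → ¬ G.Adj a b
def AllE (A B : Finset α) : Prop := ∀ ⦃a⦄, a ∈ A → ∀ ⦃b⦄, b ∈ B → G.Adj a b
def IndepOn (T : Finset α) : Prop := ∀ ⦃a⦄, a ∈ T → ∀ ⦃b⦄, b ∈ T → ¬ G.Adj a b
def CliqueOn (T : Finset α) : Prop := ∀ ⦃a⦄, a ∈ T → ∀ ⦃b⦄, b ∈ T → a ≠ b → G.Adj a b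

variable {G}

lemma seinsche
    (hP4 : ∀ a b c d : α, G.Adj a b → G.Adj b c → G.Adj c d →
      ¬ G.Adj a c → ¬ G.Adj b d → ¬ G.Adj a d → False) :
    ∀ S : Finset α, 2 ≤ S.card →
      ∃ A B : Finset α, A ∪ B = S ∧ Disjoint A B ∧ A.Nonempty ∧ B.Nonempty ∧
        (NoE G A B ∨ AllE G A B) := by
  classical
  intro S
  induction S using Finset.strongInductionOn with
  | _ S ih =>
  intro hS
  obtain ⟨x, hx⟩ : S.Nonempty := card_pos.mp (by omega)
  set S' := S.erase x with hS'def
  have hxS' : x ∉ S' := notMem_erase x S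
  have hcard : S'.card = S.card - 1 := card_erase_of_mem hx
  have hins : insert x S' = S := insert_erase hx
  have hsub : S' ⊆ S := erase_subset x S
  by_cases h1 : S'.card = 1
  · obtain ⟨y, hy⟩ := card_eq_one.mp h1
    have hxy : x ≠ y := fun h => hxS' (h ▸ hy ▸ mem_singleton_self y)
    refine ⟨{x}, {y}, ?_, ?_, ⟨x, mem_singleton_self x⟩, ⟨y, mem_singleton_self y⟩, ?_⟩
    · have e : ({x} : Finset α) ∪ {y} = insert x {y} := by ext z; simp
      rw [e, ← hy, hins]
    · simp [hxy, hxy.symm]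
    · by_cases hadj : G.Adj x y
      · right; intro a ha b hb
        rw [mem_singleton] at ha hb; subst ha; subst hb; exact hadj
      · left; intro a ha b hb
        rw [mem_singleton] at ha hb; subst ha; subst hb; exact hadj
  · have h2 : 2 ≤ S'.card := by omega
    obtain ⟨A, B, hAB, hdisj, hA, hB, hcase⟩ :=
      ih S' (ssubset_iff_of_subset hsub |>.mpr ⟨x, hx, hxS'⟩) h2
    have hmemS' : ∀ {c}, c ∈ A ∨ c ∈ B → c ∈ S' := by
      rintro c (h|h) <;> [exact hAB ▸ mem_union_left B h; exact hAB ▸ mem_union_right A h]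
    have hxA : x ∉ A := fun h => hxS' (hmemS' (Or.inl h))
    have hxB : x ∉ B := fun h => hxS' (hmemS' (Or.inr h))
    rcases hcase with hno | hall
    · -- no edges between A and B
      by_cases hNA : ∀ a ∈ A, ¬ G.Adj x a
      · refine ⟨A, insert x B, ?_, ?_, hA, insert_nonempty x B, Or.inl ?_⟩
        · rw [union_insert, hAB, hins]
        · rw [disjoint_insert_right]; exact ⟨hxA, hdisj⟩
        · intro a ha b hb
          rcases mem_insert.mp hb with rfl | hb
          · exact fun h => hNA a ha h.symm
          · exact hno ha hb
      by_cases hNB : ∀ b ∈ B, ¬ G.Adj x b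
      · refine ⟨B, insert x A, ?_, ?_, hB, insert_nonempty x A, Or.inl ?_⟩
        · rw [union_insert, union_comm, hAB, hins]
        · rw [disjoint_insert_right]; exact ⟨hxB, hdisj.symm⟩
        · intro b hb a ha
          rcases mem_insert.mp ha with rfl | ha
          · exact fun h => hNB b hb h.symm
          · exact fun h => hno ha hb h.symm
      push_neg at hNA hNB
      obtain ⟨a0, ha0, ha0adj⟩ := hNA
      obtain ⟨b0, hb0, hb0adj⟩ := hNB
      by_cases hallx : ∀ c ∈ S', G.Adj x c
      · refine ⟨{x}, S', ?_, ?_, ⟨x, mem_singleton_self x⟩, ⟨a0, hmemS' (Or.inl ha0)⟩,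
          Or.inr ?_⟩
        · have e : ({x} : Finset α) ∪ S' = insert x S' := by ext z; simp
          rw [e, hins]
        · simp [hxS']
        · intro a ha c hc; rw [mem_singleton] at ha; subst ha; exact hallx c hc
      · push_neg at hallx
        obtain ⟨c0, hc0, hc0n⟩ := hallx
        refine ⟨S'.filter (fun c => ¬ G.Adj x c), insert x (S'.filter (fun c => G.Adj x c)),
          ?_, ?_, ⟨c0, mem_filter.mpr ⟨hc0, hc0n⟩⟩, insert_nonempty _ _, Or.inl ?_⟩
        · rw [union_insert, union_comm, filter_union_filter_not_eq, hins]
        · rw [disjoint_insert_right]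
          exact ⟨by simp [hxS'], (disjoint_filter_filter_not S' S' _).symm⟩
        · intro c hcmem y hy
          obtain ⟨hcS', hcx⟩ := mem_filter.mp hcmem
          rcases mem_insert.mp hy with rfl | hy
          · exact fun h => hcx h.symm
          · obtain ⟨hdS', hdx⟩ := mem_filter.mp hy
            intro hcd
            -- c,d in S' = A ∪ B, c not adj x, d adj x
            rcases hAB ▸ hcS' , hAB ▸ hdS' with ⟨hc', hd'⟩
            rcases mem_union.mp hc' with hcA | hcB <;> rcases mem_union.mp hd' with hdA | hdB
            · -- both in A : P4 c-d-x-b0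
              exact hP4 c y x b0 hcd hdx.symm hb0adj (fun h => hcx h.symm)
                (hno hdA hb0) (hno hcA hb0)
            · exact hno hcA hdB hcd
            · exact hno hdA hcB hcd.symm
            · exact hP4 c y x a0 hcd hdx.symm ha0adj (fun h => hcx h.symm)
                (fun h => hno ha0 hdB h.symm) (fun h => hno ha0 hcB h.symm)
    · -- all edges between A and B
      by_cases hNA : ∀ a ∈ A, G.Adj x a
      · refine ⟨A, insert x B, ?_, ?_, hA, insert_nonempty x B, Or.inr ?_⟩
        · rw [union_insert, hAB, hins]
        · rw [disjoint_insert_right]; exact ⟨hxA, hdisj⟩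
        · intro a ha b hb
          rcases mem_insert.mp hb with rfl | hb
          · exact (hNA a ha).symm
          · exact hall ha hb
      by_cases hNB : ∀ b ∈ B, G.Adj x b
      · refine ⟨B, insert x A, ?_, ?_, hB, insert_nonempty x A, Or.inr ?_⟩
        · rw [union_insert, union_comm, hAB, hins]
        · rw [disjoint_insert_right]; exact ⟨hxB, hdisj.symm⟩
        · intro b hb a ha
          rcases mem_insert.mp ha with rfl | ha
          · exact (hNB b hb).symm
          · exact (hall ha hb).symm
      push_neg at hNA hNB
      obtain ⟨a0, ha0, ha0adj⟩ := hNA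
      obtain ⟨b0, hb0, hb0adj⟩ := hNB
      by_cases hnonex : ∀ c ∈ S', ¬ G.Adj x c
      · refine ⟨{x}, S', ?_, ?_, ⟨x, mem_singleton_self x⟩, ⟨a0, hmemS' (Or.inl ha0)⟩,
          Or.inl ?_⟩
        · have e : ({x} : Finset α) ∪ S' = insert x S' := by ext z; simp
          rw [e, hins]
        · simp [hxS']
        · intro a ha c hc; rw [mem_singleton] at ha; subst ha; exact hnonex c hc
      · push_neg at hnonex
        obtain ⟨c0, hc0, hc0adj⟩ := hnonex
        refine ⟨S'.filter (fun c => G.Adj x c), insert x (S'.filter (fun c => ¬ G.Adj x c)),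
          ?_, ?_, ⟨c0, mem_filter.mpr ⟨hc0, hc0adj⟩⟩, insert_nonempty _ _, Or.inr ?_⟩
        · rw [union_insert, filter_union_filter_not_eq, hins]
        · rw [disjoint_insert_right]
          exact ⟨by simp [hxS'], disjoint_filter_filter_not S' S' _⟩
        · intro d hdmem c hc
          obtain ⟨hdS', hdx⟩ := mem_filter.mp hdmem
          rcases mem_insert.mp hc with rfl | hc
          · exact hdx.symm
          · obtain ⟨hcS', hcx⟩ := mem_filter.mp hc
            by_contra hdc
            rcases mem_union.mp (hAB ▸ hcS') with hcA | hcB <;>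
              rcases mem_union.mp (hAB ▸ hdS') with hdA | hdB
            · -- both in A : P4 x-d-b0-c
              exact hP4 x d b0 c hdx (hall hdA hb0) (hall hcA hb0).symm
                hb0adj hdc hcx
            · exact hdc (hall hcA hdB).symm
            · exact hdc (hall hdA hcB)
            · exact hP4 x d a0 c hdx (hall ha0 hdB).symm (hall ha0 hcB)
                ha0adj hdc hcx

end Sein
section Main
open Finset
variable {α : Type*} [DecidableEq α] {G : SimpleGraph α}

lemma eqsub {A B : Finset α} (h : A = B) : A ⊆ B := h ▸ Finset.Subset.refl A

lemma funion1 {A B S S1 S2 T1 T2 : Finset α} (hABeq : A ∪ B = S)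
    (hu : S1 ∪ S2 = A) (hu' : T1 ∪ T2 = B) : S1 ∪ T1 ∪ (S2 ∪ T2) = S := by
  subst hABeq hu hu'; ext z; simp only [mem_union]; tauto

lemma funion2 {A B S C I : Finset α} (hABeq : A ∪ B = S)
    (hu : C ∪ I = A) : C ∪ (I ∪ B) = S := by
  subst hABeq hu; ext z; simp only [mem_union]; tauto

lemma funion3 {A B S C S1 S2 T1 T2 : Finset α} (hABeq : A ∪ B = S)
    (hu : C ∪ S1 ∪ S2 = A) (hu' : T1 ∪ T2 = B) : C ∪ (S1 ∪ T1) ∪ (S2 ∪ T2) = S := by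
  subst hABeq hu hu'; ext z; simp only [mem_union]; tauto

lemma funion4 {A B S C I : Finset α} (hABeq : A ∪ B = S)
    (hu : C ∪ I = A) : C ∪ B ∪ I = S := by
  subst hABeq hu; ext z; simp only [mem_union]; tauto

lemma funion5 {A B S C S1 S2 : Finset α} (hABeq : A ∪ B = S)
    (hu : C ∪ S1 ∪ S2 = A) : C ∪ B ∪ S1 ∪ S2 = S := by
  subst hABeq hu; ext z; simp only [mem_union]; tauto

lemma funion6 {A B S CA IA CB IB : Finset α} (hABeq : A ∪ B = S)
    (huA : CA ∪ IA = A) (huB : CB ∪ IB = B) : CA ∪ CB ∪ IA ∪ IB = S := by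
  subst hABeq huA huB; ext z; simp only [mem_union]; tauto

lemma noE_mono {A B A' B' : Finset α} (h : NoE G A B) (hA : A' ⊆ A) (hB : B' ⊆ B) :
    NoE G A' B' := fun _ ha _ hb => h (hA ha) (hB hb)

lemma allE_mono {A B A' B' : Finset α} (h : AllE G A B) (hA : A' ⊆ A) (hB : B' ⊆ B) :
    AllE G A' B' := fun _ ha _ hb => h (hA ha) (hB hb)

lemma indepOn_union {S1 T1 : Finset α} (h1 : IndepOn G S1) (h2 : IndepOn G T1)
    (h : NoE G S1 T1) : IndepOn G (S1 ∪ T1) := by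
  intro a ha b hb
  rcases mem_union.mp ha with ha | ha <;> rcases mem_union.mp hb with hb | hb
  · exact h1 ha hb
  · exact h ha hb
  · exact fun hh => h hb ha hh.symm
  · exact h2 ha hb

lemma cliqueOn_union {S1 T1 : Finset α} (h1 : CliqueOn G S1) (h2 : CliqueOn G T1)
    (h : AllE G S1 T1) : CliqueOn G (S1 ∪ T1) := by
  intro a ha b hb hne
  rcases mem_union.mp ha with ha | ha <;> rcases mem_union.mp hb with hb | hb
  · exact h1 ha hb hne
  · exact h ha hb
  · exact (h hb ha).symm
  · exact h2 ha hb hne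

lemma indepOn_small {S : Finset α} (h : S.card ≤ 1) : IndepOn G S := by
  intro a ha b hb hab
  exact hab.ne (Finset.card_le_one.mp h a ha b hb)

lemma cliqueOn_small {S : Finset α} (h : S.card ≤ 1) : CliqueOn G S := by
  intro a ha b hb hne
  exact absurd (Finset.card_le_one.mp h a ha b hb) hne

theorem mainLemma
    (hP4 : ∀ a b c d : α, G.Adj a b → G.Adj b c → G.Adj c d →
      ¬ G.Adj a c → ¬ G.Adj b d → ¬ G.Adj a d → False)
    (hoct : ∀ a1 a2 b1 b2 c1 c2 : α, a1 ≠ a2 → b1 ≠ b2 → c1 ≠ c2 →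
      ¬ G.Adj a1 a2 → ¬ G.Adj b1 b2 → ¬ G.Adj c1 c2 →
      (∀ i j, G.Adj (![a1,a2] i) (![b1,b2] j)) →
      (∀ i j, G.Adj (![a1,a2] i) (![c1,c2] j)) →
      (∀ i j, G.Adj (![b1,b2] i) (![c1,c2] j)) → False)
    (hjk2 : ∀ a1 a2 b1 b2 e1 e2 : α, e1 ≠ e2 → ¬ G.Adj e1 e2 →
      G.Adj a1 a2 → G.Adj b1 b2 →
      (∀ i j, ![a1,a2] i ≠ ![b1,b2] j) →
      (∀ i j, ¬ G.Adj (![a1,a2] i) (![b1,b2] j)) →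
      (∀ i j, G.Adj (Sum.elim ![a1,a2] ![b1,b2] i) (![e1,e2] j)) → False)
    (h2k3 : ∀ a1 a2 a3 b1 b2 b3 : α,
      G.Adj a1 a2 → G.Adj a1 a3 → G.Adj a2 a3 →
      G.Adj b1 b2 → G.Adj b1 b3 → G.Adj b2 b3 →
      (∀ i j, ![a1,a2,a3] i ≠ ![b1,b2,b3] j) →
      (∀ i j, ¬ G.Adj (![a1,a2,a3] i) (![b1,b2,b3] j)) → False) :
    ∀ S : Finset α,
      ((∀ ⦃a⦄, a ∈ S → ∀ ⦃b⦄, b ∈ S → ∀ ⦃c⦄, c ∈ S →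
          G.Adj a b → G.Adj a c → G.Adj b c → False) →
        ∃ S1 S2 : Finset α, S1 ∪ S2 = S ∧ IndepOn G S1 ∧ IndepOn G S2)
      ∧ (((∀ ⦃a⦄, a ∈ S → ∀ ⦃b⦄, b ∈ S → ∀ ⦃c⦄, c ∈ S → ∀ ⦃d⦄, d ∈ S →
            G.Adj a b → G.Adj c d → ¬ G.Adj a c → ¬ G.Adj a d →
            ¬ G.Adj b c → ¬ G.Adj b d → False)
          ∧ (∀ ⦃a⦄, a ∈ S → ∀ ⦃b⦄, b ∈ S → ∀ ⦃c⦄, c ∈ S → ∀ ⦃d⦄, d ∈ S →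
            a ≠ b → c ≠ d → ¬ G.Adj a b → ¬ G.Adj c d →
            G.Adj a c → G.Adj a d → G.Adj b c → G.Adj b d → False)) →
        ∃ C I : Finset α, C ∪ I = S ∧ CliqueOn G C ∧ IndepOn G I)
      ∧ (∃ C S1 S2 : Finset α, C ∪ S1 ∪ S2 = S ∧ CliqueOn G C ∧
          IndepOn G S1 ∧ IndepOn G S2) := by
  classical
  intro S
  induction S using Finset.strongInductionOn with
  | _ S ih =>
  by_cases hsmall : S.card ≤ 1
  · refine ⟨fun _ => ⟨S, ∅, by simp, indepOn_small hsmall, indepOn_small (by simp)⟩,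
      fun _ => ⟨S, ∅, by simp, cliqueOn_small hsmall, indepOn_small (by simp)⟩,
      ⟨S, ∅, ∅, by simp, cliqueOn_small hsmall, indepOn_small (by simp),
        indepOn_small (by simp)⟩⟩
  · obtain ⟨A, B, hABeq, hdisj, hA, hB, hcase⟩ := seinsche hP4 S (by omega)
    have hAsub : A ⊆ S := hABeq ▸ subset_union_left
    have hBsub : B ⊆ S := hABeq ▸ subset_union_right
    have hAlt : A ⊂ S := by
      obtain ⟨b, hb⟩ := hB
      exact ssubset_iff_of_subset hAsub |>.mpr ⟨b, hBsub hb, fun h => hdisj.forall_ne_finset h hb rfl⟩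
    have hBlt : B ⊂ S := by
      obtain ⟨a, ha⟩ := hA
      exact ssubset_iff_of_subset hBsub |>.mpr ⟨a, hAsub ha, fun h => hdisj.forall_ne_finset ha h rfl⟩
    have hBAeq : B ∪ A = S := by rw [union_comm]; exact hABeq
    have hABne : ∀ {x y : α}, x ∈ A → y ∈ B → x ≠ y :=
      fun hx hy h => Finset.disjoint_left.mp hdisj hx (h ▸ hy)
    obtain ⟨ihA0, ihA1, ihA2⟩ := ih A hAlt
    obtain ⟨ihB0, ihB1, ihB2⟩ := ih B hBlt
    rcases hcase with hno | hall
    · -- disjoint union case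
      refine ⟨?_, ?_, ?_⟩
      · -- Q0 : triangle-free
        intro htf
        obtain ⟨S1, S2, hu, h1, h2⟩ := ihA0 (fun a ha b hb c hc => htf (hAsub ha) (hAsub hb) (hAsub hc))
        obtain ⟨T1, T2, hu', h1', h2'⟩ := ihB0 (fun a ha b hb c hc => htf (hBsub ha) (hBsub hb) (hBsub hc))
        refine ⟨S1 ∪ T1, S2 ∪ T2, ?_, ?_, ?_⟩
        · exact funion1 hABeq hu hu'
        · exact indepOn_union h1 h1'
            (noE_mono hno (subset_union_left.trans (eqsub hu)) (subset_union_left.trans (eqsub hu')))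
        · exact indepOn_union h2 h2'
            (noE_mono hno (subset_union_right.trans (eqsub hu)) (subset_union_right.trans (eqsub hu')))
      · -- Q1 : split
        rintro ⟨hno2k2, hnoC4⟩
        have hres : ∀ {X : Finset α}, X ⊆ S →
            ((∀ ⦃a⦄, a ∈ X → ∀ ⦃b⦄, b ∈ X → ∀ ⦃c⦄, c ∈ X → ∀ ⦃d⦄, d ∈ X →
              G.Adj a b → G.Adj c d → ¬ G.Adj a c → ¬ G.Adj a d →
              ¬ G.Adj b c → ¬ G.Adj b d → False)
            ∧ (∀ ⦃a⦄, a ∈ X → ∀ ⦃b⦄, b ∈ X → ∀ ⦃c⦄, c ∈ X → ∀ ⦃d⦄, d ∈ X →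
              a ≠ b → c ≠ d → ¬ G.Adj a b → ¬ G.Adj c d →
              G.Adj a c → G.Adj a d → G.Adj b c → G.Adj b d → False)) := by
          intro X hX
          exact ⟨fun a ha b hb c hc d hd => hno2k2 (hX ha) (hX hb) (hX hc) (hX hd),
            fun a ha b hb c hc d hd => hnoC4 (hX ha) (hX hb) (hX hc) (hX hd)⟩
        by_cases hBind : IndepOn G B
        · obtain ⟨C, I, hu, hC, hI⟩ := ihA1 (hres hAsub)
          refine ⟨C, I ∪ B, ?_, hC, ?_⟩
          · exact funion2 hABeq hu
          · exact indepOn_union hI hBind (noE_mono hno (subset_union_right.trans (eqsub hu)) (le_refl B))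
        · -- B has an edge; then A must be independent
          have hAind : IndepOn G A := by
            intro a1 ha1 a2 ha2 hadj
            rw [IndepOn] at hBind
            push_neg at hBind
            obtain ⟨b1, hb1, b2, hb2, hbadj⟩ := hBind
            exact hno2k2 (hAsub ha1) (hAsub ha2) (hBsub hb1) (hBsub hb2) hadj hbadj
              (hno ha1 hb1) (hno ha1 hb2) (hno ha2 hb1) (hno ha2 hb2)
          obtain ⟨C, I, hu, hC, hI⟩ := ihB1 (hres hBsub)
          refine ⟨C, I ∪ A, ?_, hC, ?_⟩
          · exact funion2 hBAeq hu
          · refine indepOn_union hI hAind ?_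
            intro x hx y hy hxy
            exact hno hy (eqsub hu (mem_union_right C hx)) hxy.symm
      · -- Q2
        by_cases hBtf : ∀ ⦃a⦄, a ∈ B → ∀ ⦃b⦄, b ∈ B → ∀ ⦃c⦄, c ∈ B →
            G.Adj a b → G.Adj a c → G.Adj b c → False
        · obtain ⟨C, S1, S2, hu, hC, h1, h2⟩ := ihA2
          obtain ⟨T1, T2, hu', h1', h2'⟩ := ihB0 hBtf
          refine ⟨C, S1 ∪ T1, S2 ∪ T2, ?_, hC, ?_, ?_⟩
          · exact funion3 hABeq hu hu'
          · exact indepOn_union h1 h1' (noE_mono hno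
              (fun x hx => eqsub hu (mem_union_left S2 (mem_union_right C hx)) )
              (subset_union_left.trans (eqsub hu')))
          · exact indepOn_union h2 h2' (noE_mono hno
              (fun x hx => eqsub hu (mem_union_right _ hx))
              (subset_union_right.trans (eqsub hu')))
        · -- B has a triangle; then A is triangle-free
          push_neg at hBtf
          obtain ⟨b1, hb1, b2, hb2, b3, hb3, hb12, hb13, hb23, -⟩ := hBtf
          have hAtf : ∀ ⦃a⦄, a ∈ A → ∀ ⦃b⦄, b ∈ A → ∀ ⦃c⦄, c ∈ A →
              G.Adj a b → G.Adj a c → G.Adj b c → False := by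
            intro a1 ha1 a2 ha2 a3 ha3 ha12 ha13 ha23
            refine h2k3 a1 a2 a3 b1 b2 b3 ha12 ha13 ha23 hb12 hb13 hb23 ?_ ?_
            · intro i j
              fin_cases i <;> fin_cases j <;>
                first
                  | exact hABne ha1 hb1 | exact hABne ha1 hb2 | exact hABne ha1 hb3
                  | exact hABne ha2 hb1 | exact hABne ha2 hb2 | exact hABne ha2 hb3
                  | exact hABne ha3 hb1 | exact hABne ha3 hb2 | exact hABne ha3 hb3
            · intro i j
              fin_cases i <;> fin_cases j <;>
                first
                  | exact hno ha1 hb1 | exact hno ha1 hb2 | exact hno ha1 hb3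
                  | exact hno ha2 hb1 | exact hno ha2 hb2 | exact hno ha2 hb3
                  | exact hno ha3 hb1 | exact hno ha3 hb2 | exact hno ha3 hb3
          obtain ⟨C, S1, S2, hu, hC, h1, h2⟩ := ihB2
          obtain ⟨T1, T2, hu', h1', h2'⟩ := ihA0 hAtf
          refine ⟨C, S1 ∪ T1, S2 ∪ T2, ?_, hC, ?_, ?_⟩
          · exact funion3 hBAeq hu hu'
          · refine indepOn_union h1 h1' ?_
            intro x hx y hy hxy
            exact hno (eqsub hu' (mem_union_left T2 hy))
              (eqsub hu (mem_union_left S2 (mem_union_right C hx))) hxy.symm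
          · refine indepOn_union h2 h2' ?_
            intro x hx y hy hxy
            exact hno (eqsub hu' (mem_union_right T1 hy))
              (eqsub hu (mem_union_right _ hx)) hxy.symm
    · -- join case
      refine ⟨?_, ?_, ?_⟩
      · -- Q0
        intro htf
        have hAind : IndepOn G A := by
          intro a1 ha1 a2 ha2 hadj
          obtain ⟨b, hb⟩ := hB
          exact htf (hAsub ha1) (hAsub ha2) (hBsub hb) hadj (hall ha1 hb) (hall ha2 hb)
        have hBind : IndepOn G B := by
          intro b1 hb1 b2 hb2 hadj
          obtain ⟨a, ha⟩ := hA
          exact htf (hBsub hb1) (hBsub hb2) (hAsub ha) hadj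
            (hall ha hb1).symm (hall ha hb2).symm
        exact ⟨A, B, hABeq, hAind, hBind⟩
      · -- Q1
        rintro ⟨hno2k2, hnoC4⟩
        have hres : ∀ {X : Finset α}, X ⊆ S →
            ((∀ ⦃a⦄, a ∈ X → ∀ ⦃b⦄, b ∈ X → ∀ ⦃c⦄, c ∈ X → ∀ ⦃d⦄, d ∈ X →
              G.Adj a b → G.Adj c d → ¬ G.Adj a c → ¬ G.Adj a d →
              ¬ G.Adj b c → ¬ G.Adj b d → False)
            ∧ (∀ ⦃a⦄, a ∈ X → ∀ ⦃b⦄, b ∈ X → ∀ ⦃c⦄, c ∈ X → ∀ ⦃d⦄, d ∈ X →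
              a ≠ b → c ≠ d → ¬ G.Adj a b → ¬ G.Adj c d →
              G.Adj a c → G.Adj a d → G.Adj b c → G.Adj b d → False)) := by
          intro X hX
          exact ⟨fun a ha b hb c hc d hd => hno2k2 (hX ha) (hX hb) (hX hc) (hX hd),
            fun a ha b hb c hc d hd => hnoC4 (hX ha) (hX hb) (hX hc) (hX hd)⟩
        by_cases hBcl : CliqueOn G B
        · obtain ⟨C, I, hu, hC, hI⟩ := ihA1 (hres hAsub)
          refine ⟨C ∪ B, I, ?_, ?_, hI⟩
          · exact funion4 hABeq hu
          · exact cliqueOn_union hC hBcl (allE_mono hall (subset_union_left.trans (eqsub hu)) (le_refl B))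
        · have hAcl : CliqueOn G A := by
            intro a1 ha1 a2 ha2 hne
            rw [CliqueOn] at hBcl
            push_neg at hBcl
            obtain ⟨b1, hb1, b2, hb2, hbne, hbnadj⟩ := hBcl
            by_contra hnadj
            exact hnoC4 (hAsub ha1) (hAsub ha2) (hBsub hb1) (hBsub hb2) hne hbne hnadj hbnadj
              (hall ha1 hb1) (hall ha1 hb2) (hall ha2 hb1) (hall ha2 hb2)
          obtain ⟨C, I, hu, hC, hI⟩ := ihB1 (hres hBsub)
          refine ⟨C ∪ A, I, ?_, ?_, hI⟩
          · exact funion4 hBAeq hu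
          · refine cliqueOn_union hC hAcl ?_
            intro x hx y hy
            exact (hall hy (eqsub hu (mem_union_left I hx))).symm
      · -- Q2 join
        by_cases hBcl : CliqueOn G B
        · obtain ⟨C, S1, S2, hu, hC, h1, h2⟩ := ihA2
          refine ⟨C ∪ B, S1, S2, ?_, ?_, h1, h2⟩
          · exact funion5 hABeq hu
          · exact cliqueOn_union hC hBcl
              (allE_mono hall (fun x hx => eqsub hu (mem_union_left S2 (mem_union_left S1 hx))) (le_refl B))
        by_cases hAcl : CliqueOn G A
        · obtain ⟨C, S1, S2, hu, hC, h1, h2⟩ := ihB2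
          refine ⟨C ∪ A, S1, S2, ?_, ?_, h1, h2⟩
          · exact funion5 hBAeq hu
          · refine cliqueOn_union hC hAcl ?_
            intro x hx y hy
            exact (hall hy (eqsub hu (mem_union_left S2 (mem_union_left S1 hx)))).symm
        · -- both non-cliques
          rw [CliqueOn] at hAcl hBcl
          push_neg at hAcl hBcl
          obtain ⟨p1, hp1, p2, hp2, hpne, hpnadj⟩ := hAcl
          obtain ⟨q1, hq1, q2, hq2, hqne, hqnadj⟩ := hBcl
          have hAfree : (∀ ⦃a⦄, a ∈ A → ∀ ⦃b⦄, b ∈ A → ∀ ⦃c⦄, c ∈ A → ∀ ⦃d⦄, d ∈ A →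
              G.Adj a b → G.Adj c d → ¬ G.Adj a c → ¬ G.Adj a d →
              ¬ G.Adj b c → ¬ G.Adj b d → False)
            ∧ (∀ ⦃a⦄, a ∈ A → ∀ ⦃b⦄, b ∈ A → ∀ ⦃c⦄, c ∈ A → ∀ ⦃d⦄, d ∈ A →
              a ≠ b → c ≠ d → ¬ G.Adj a b → ¬ G.Adj c d →
              G.Adj a c → G.Adj a d → G.Adj b c → G.Adj b d → False) := by
            constructor
            · intro a ha b hb c hc d hd hab hcd hnac hnad hnbc hnbd
              have hac : a ≠ c := fun h => hnad (h ▸ hcd)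
              have had : a ≠ d := fun h => hnac (by subst h; exact hcd.symm)
              have hbc : b ≠ c := fun h => hnbd (h ▸ hcd)
              have hbd : b ≠ d := fun h => hnbc (by subst h; exact hcd.symm)
              refine hjk2 a b c d q1 q2 hqne hqnadj hab hcd ?_ ?_ ?_
              · intro i j
                fin_cases i <;> fin_cases j <;>
                  first | exact hac | exact had | exact hbc | exact hbd
              · intro i j
                fin_cases i <;> fin_cases j <;>
                  first | exact hnac | exact hnad | exact hnbc | exact hnbd
              · rintro (i|i) j <;> fin_cases i <;> fin_cases j <;>
                  first
                    | exact hall ha hq1 | exact hall ha hq2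
                    | exact hall hb hq1 | exact hall hb hq2
                    | exact hall hc hq1 | exact hall hc hq2
                    | exact hall hd hq1 | exact hall hd hq2
            · intro a ha b hb c hc d hd hnab hncd hab hcd hac had hbc hbd
              refine hoct a b c d q1 q2 hnab hncd hqne hab hcd hqnadj ?_ ?_ ?_
              · intro i j
                fin_cases i <;> fin_cases j <;>
                  first | exact hac | exact had | exact hbc | exact hbd
              · intro i j
                fin_cases i <;> fin_cases j <;>
                  first
                    | exact hall ha hq1 | exact hall ha hq2
                    | exact hall hb hq1 | exact hall hb hq2
              · intro i j
                fin_cases i <;> fin_cases j <;>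
                  first
                    | exact hall hc hq1 | exact hall hc hq2
                    | exact hall hd hq1 | exact hall hd hq2
          have hBfree : (∀ ⦃a⦄, a ∈ B → ∀ ⦃b⦄, b ∈ B → ∀ ⦃c⦄, c ∈ B → ∀ ⦃d⦄, d ∈ B →
              G.Adj a b → G.Adj c d → ¬ G.Adj a c → ¬ G.Adj a d →
              ¬ G.Adj b c → ¬ G.Adj b d → False)
            ∧ (∀ ⦃a⦄, a ∈ B → ∀ ⦃b⦄, b ∈ B → ∀ ⦃c⦄, c ∈ B → ∀ ⦃d⦄, d ∈ B →
              a ≠ b → c ≠ d → ¬ G.Adj a b → ¬ G.Adj c d →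
              G.Adj a c → G.Adj a d → G.Adj b c → G.Adj b d → False) := by
            constructor
            · intro a ha b hb c hc d hd hab hcd hnac hnad hnbc hnbd
              have hac : a ≠ c := fun h => hnad (h ▸ hcd)
              have had : a ≠ d := fun h => hnac (by subst h; exact hcd.symm)
              have hbc : b ≠ c := fun h => hnbd (h ▸ hcd)
              have hbd : b ≠ d := fun h => hnbc (by subst h; exact hcd.symm)
              refine hjk2 a b c d p1 p2 hpne hpnadj hab hcd ?_ ?_ ?_
              · intro i j
                fin_cases i <;> fin_cases j <;>
                  first | exact hac | exact had | exact hbc | exact hbd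
              · intro i j
                fin_cases i <;> fin_cases j <;>
                  first | exact hnac | exact hnad | exact hnbc | exact hnbd
              · rintro (i|i) j <;> fin_cases i <;> fin_cases j <;>
                  first
                    | exact (hall hp1 ha).symm | exact (hall hp2 ha).symm
                    | exact (hall hp1 hb).symm | exact (hall hp2 hb).symm
                    | exact (hall hp1 hc).symm | exact (hall hp2 hc).symm
                    | exact (hall hp1 hd).symm | exact (hall hp2 hd).symm
            · intro a ha b hb c hc d hd hnab hncd hab hcd hac had hbc hbd
              refine hoct a b c d p1 p2 hnab hncd hpne hab hcd hpnadj ?_ ?_ ?_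
              · intro i j
                fin_cases i <;> fin_cases j <;>
                  first | exact hac | exact had | exact hbc | exact hbd
              · intro i j
                fin_cases i <;> fin_cases j <;>
                  first
                    | exact (hall hp1 ha).symm | exact (hall hp2 ha).symm
                    | exact (hall hp1 hb).symm | exact (hall hp2 hb).symm
              · intro i j
                fin_cases i <;> fin_cases j <;>
                  first
                    | exact (hall hp1 hc).symm | exact (hall hp2 hc).symm
                    | exact (hall hp1 hd).symm | exact (hall hp2 hd).symm
          obtain ⟨CA, IA, huA, hCA, hIA⟩ := ihA1 hAfree
          obtain ⟨CB, IB, huB, hCB, hIB⟩ := ihB1 hBfree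
          refine ⟨CA ∪ CB, IA, IB, ?_, ?_, hIA, hIB⟩
          · exact funion6 hABeq huA huB
          · refine cliqueOn_union hCA hCB ?_
            intro x hx y hy
            exact hall (eqsub huA (mem_union_left IA hx)) (eqsub huB (mem_union_left IB hy))

end Main
section Fwd

instance {α β : Type*} (G : SimpleGraph α) (H : SimpleGraph β)
    [DecidableRel G.Adj] [DecidableRel H.Adj] : DecidableRel (gUnion G H).Adj :=
  fun x y =>
    match x, y with
    | Sum.inl a, Sum.inl b => (inferInstance : Decidable (G.Adj a b))
    | Sum.inl _, Sum.inr _ => isFalse (fun h => h)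
    | Sum.inr _, Sum.inl _ => isFalse (fun h => h)
    | Sum.inr a, Sum.inr b => (inferInstance : Decidable (H.Adj a b))

instance {α β : Type*} (G : SimpleGraph α) (H : SimpleGraph β)
    [DecidableRel G.Adj] [DecidableRel H.Adj] : DecidableRel (gJoin G H).Adj :=
  fun x y =>
    match x, y with
    | Sum.inl a, Sum.inl b => (inferInstance : Decidable (G.Adj a b))
    | Sum.inl _, Sum.inr _ => isTrue trivial
    | Sum.inr _, Sum.inl _ => isTrue trivial
    | Sum.inr a, Sum.inr b => (inferInstance : Decidable (H.Adj a b))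

instance {n : ℕ} : DecidableRel (KG n).Adj :=
  fun a b => (inferInstance : Decidable (a ≠ b))

instance {n : ℕ} : DecidableRel (EG n).Adj := fun _ _ => isFalse (fun h => h)

instance : DecidableRel octahedron.Adj :=
  inferInstanceAs (DecidableRel (gJoin (EG 2) (gJoin (EG 2) (EG 2))).Adj)

instance : DecidableRel twoK2.Adj :=
  inferInstanceAs (DecidableRel (gUnion (KG 2) (KG 2)).Adj)

instance : DecidableRel twoK3.Adj :=
  inferInstanceAs (DecidableRel (gUnion (KG 3) (KG 3)).Adj)

instance : DecidableRel (gJoin twoK2 (EG 2)).Adj :=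
  inferInstance

lemma oct_triangle : ∀ p : (Fin 2 ⊕ (Fin 2 ⊕ Fin 2)) → Bool,
    (∀ u v, p u = true → p v = true → u ≠ v → octahedron.Adj u v) →
    ∃ a b c, p a = false ∧ p b = false ∧ p c = false ∧
      octahedron.Adj a b ∧ octahedron.Adj a c ∧ octahedron.Adj b c := by decide

set_option synthInstance.maxHeartbeats 1000000 in
set_option synthInstance.maxSize 512 in
set_option maxHeartbeats 2000000 in
lemma jk2_triangle : ∀ p : ((Fin 2 ⊕ Fin 2) ⊕ Fin 2) → Bool,
    (∀ u v, p u = true → p v = true → u ≠ v → (gJoin twoK2 (EG 2)).Adj u v) →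
    ∃ a b c, p a = false ∧ p b = false ∧ p c = false ∧
      (gJoin twoK2 (EG 2)).Adj a b ∧ (gJoin twoK2 (EG 2)).Adj a c ∧
        (gJoin twoK2 (EG 2)).Adj b c := by decide

lemma twoK3_triangle : ∀ p : (Fin 3 ⊕ Fin 3) → Bool,
    (∀ u v, p u = true → p v = true → u ≠ v → twoK3.Adj u v) →
    ∃ a b c, p a = false ∧ p b = false ∧ p c = false ∧
      twoK3.Adj a b ∧ twoK3.Adj a c ∧ twoK3.Adj b c := by decide

variable {α : Type*} {G : SimpleGraph α}

lemma indep_no_adj {T : Set α} (h : (G.induce T).CliqueFree 2)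
    {x y : α} (hx : x ∈ T) (hy : y ∈ T) (hxy : G.Adj x y) : False := by
  rw [SimpleGraph.cliqueFree_two] at h
  have : (G.induce T).Adj ⟨x, hx⟩ ⟨y, hy⟩ := by
    simp only [SimpleGraph.comap_adj, Function.Embedding.coe_subtype]
    exact hxy
  rw [h] at this
  exact this

lemma not_contains_of_partition {V : Type*} (H : SimpleGraph V)
    (htri : ∀ p : V → Bool,
      (∀ u v, p u = true → p v = true → u ≠ v → H.Adj u v) →
      ∃ a b c, p a = false ∧ p b = false ∧ p c = false ∧
        H.Adj a b ∧ H.Adj a c ∧ H.Adj b c)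
    (hpart : OneTwoPartitionable G) : ¬ Contains G H := by
  classical
  rintro ⟨f⟩
  obtain ⟨C, S1, S2, hcov, hC, h1, h2⟩ := hpart
  set p : V → Bool := fun v => decide (f v ∈ C) with hp
  have hcl : ∀ u v, p u = true → p v = true → u ≠ v → H.Adj u v := by
    intro u v hu hv huv
    have hu' : f u ∈ C := of_decide_eq_true hu
    have hv' : f v ∈ C := of_decide_eq_true hv
    exact f.map_rel_iff.mp (hC hu' hv' (fun h => huv (f.injective h)))
  obtain ⟨a, b, c, hpa, hpb, hpc, hab, hac, hbc⟩ := htri p hcl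
  have hmem : ∀ v, p v = false → f v ∈ S1 ∨ f v ∈ S2 := by
    intro v hv
    have hfv : f v ∈ C ∪ S1 ∪ S2 := hcov ▸ Set.mem_univ (f v)
    rcases hfv with (hc | hs1) | hs2
    · exact absurd hc (of_decide_eq_false hv)
    · exact Or.inl hs1
    · exact Or.inr hs2
  have gab : G.Adj (f a) (f b) := f.map_rel_iff.mpr hab
  have gac : G.Adj (f a) (f c) := f.map_rel_iff.mpr hac
  have gbc : G.Adj (f b) (f c) := f.map_rel_iff.mpr hbc
  rcases hmem a hpa with ha | ha <;> rcases hmem b hpb with hb | hb <;>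
    rcases hmem c hpc with hc | hc
  · exact indep_no_adj h1 ha hb gab
  · exact indep_no_adj h1 ha hb gab
  · exact indep_no_adj h1 ha hc gac
  · exact indep_no_adj h2 hb hc gbc
  · exact indep_no_adj h1 hb hc gbc
  · exact indep_no_adj h2 ha hc gac
  · exact indep_no_adj h2 ha hb gab
  · exact indep_no_adj h2 ha hb gab

lemma cf2_of_indep [DecidableEq α] {S1 : Finset α} (h : IndepOn G S1) :
    (G.induce (↑S1 : Set α)).CliqueFree 2 := by
  rw [SimpleGraph.cliqueFree_two]
  ext ⟨x, hx⟩ ⟨y, hy⟩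
  simp only [SimpleGraph.comap_adj, Function.Embedding.coe_subtype,
    SimpleGraph.bot_adj, iff_false]
  exact h (Finset.mem_coe.mp hx) (Finset.mem_coe.mp hy)

end Fwd

theorem stmt_7 {α : Type*} [Fintype α] (G : SimpleGraph α) (hcog : IsCograph G) :
    OneTwoPartitionable G ↔
      (¬ Contains G octahedron ∧ ¬ Contains G (gJoin twoK2 (EG 2)) ∧
       ¬ Contains G twoK3) := by
  classical
  constructor
  · intro h
    exact ⟨not_contains_of_partition _ oct_triangle h,
      not_contains_of_partition _ jk2_triangle h,
      not_contains_of_partition _ twoK3_triangle h⟩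
  · rintro ⟨hoctF, hjk2F, h2k3F⟩
    have hP4' : ∀ a b c d : α, G.Adj a b → G.Adj b c → G.Adj c d →
        ¬ G.Adj a c → ¬ G.Adj b d → ¬ G.Adj a d → False :=
      fun a b c d h1 h2 h3 n1 n2 n3 => hcog (contains_P4 h1 h2 h3 n1 n3 n2)
    have hoct' : ∀ a1 a2 b1 b2 c1 c2 : α, a1 ≠ a2 → b1 ≠ b2 → c1 ≠ c2 →
        ¬ G.Adj a1 a2 → ¬ G.Adj b1 b2 → ¬ G.Adj c1 c2 →
        (∀ i j, G.Adj (![a1,a2] i) (![b1,b2] j)) →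
        (∀ i j, G.Adj (![a1,a2] i) (![c1,c2] j)) →
        (∀ i j, G.Adj (![b1,b2] i) (![c1,c2] j)) → False :=
      fun a1 a2 b1 b2 c1 c2 ha hb hc hna hnb hnc hab hac hbc =>
        hoctF (contains_oct ha hb hc hna hnb hnc hab hac hbc)
    have hjk2' : ∀ a1 a2 b1 b2 e1 e2 : α, e1 ≠ e2 → ¬ G.Adj e1 e2 →
        G.Adj a1 a2 → G.Adj b1 b2 →
        (∀ i j, ![a1,a2] i ≠ ![b1,b2] j) →
        (∀ i j, ¬ G.Adj (![a1,a2] i) (![b1,b2] j)) →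
        (∀ i j, G.Adj (Sum.elim ![a1,a2] ![b1,b2] i) (![e1,e2] j)) → False :=
      fun a1 a2 b1 b2 e1 e2 he hne ha hb hd hnab hea =>
        hjk2F (contains_joinK2 he hne ha hb hd hnab hea)
    have h2k3' : ∀ a1 a2 a3 b1 b2 b3 : α,
        G.Adj a1 a2 → G.Adj a1 a3 → G.Adj a2 a3 →
        G.Adj b1 b2 → G.Adj b1 b3 → G.Adj b2 b3 →
        (∀ i j, ![a1,a2,a3] i ≠ ![b1,b2,b3] j) →
        (∀ i j, ¬ G.Adj (![a1,a2,a3] i) (![b1,b2,b3] j)) → False :=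
      fun a1 a2 a3 b1 b2 b3 g1 g2 g3 g4 g5 g6 hd hn =>
        h2k3F (contains_twoK3 g1 g2 g3 g4 g5 g6 hd hn)
    obtain ⟨C, S1, S2, hu, hC, h1, h2⟩ :=
      (mainLemma hP4' hoct' hjk2' h2k3' Finset.univ).2.2
    refine ⟨↑C, ↑S1, ↑S2, ?_, ?_, cf2_of_indep h1, cf2_of_indep h2⟩
    · rw [← Finset.coe_union, ← Finset.coe_union, hu, Finset.coe_univ]
    · intro a ha b hb hne
      exact hC (Finset.mem_coe.mp ha) (Finset.mem_coe.mp hb) hne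
end

section
/- Let G be a cograph that is in-partitionable and such that every proper induced subgraph of G is partitionable (i.e. G is a vertex-minimal in-partitionable cograph). Then G is connected. -/
open SimpleGraph

lemma induce_cliqueFree3_iff {α : Type*} (G : SimpleGraph α) (X : Set α) :
    (G.induce X).CliqueFree 3 ↔
      ∀ a ∈ X, ∀ b ∈ X, ∀ c ∈ X, G.Adj a b → G.Adj a c → G.Adj b c → False := by
  classical
  constructor
  · intro h a ha b hb c hc hab hac hbc
    exact h {⟨a, ha⟩, ⟨b, hb⟩, ⟨c, hc⟩}
      (is3Clique_triple_iff.mpr ⟨by simpa using hab, by simpa using hac, by simpa using hbc⟩)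
  · intro h t ht
    rw [is3Clique_iff] at ht
    obtain ⟨x, y, z, hxy, hxz, hyz, -⟩ := ht
    exact h x x.2 y y.2 z z.2 (by simpa using hxy) (by simpa using hxz) (by simpa using hyz)

lemma contains_path3_iff {α : Type*} (G : SimpleGraph α) (X : Set α) :
    Contains (G.induce X) (pathGraph 3) ↔
      ∃ a ∈ X, ∃ b ∈ X, ∃ c ∈ X, a ≠ c ∧ G.Adj a b ∧ G.Adj b c ∧ ¬ G.Adj a c := by
  constructor
  · rintro ⟨f⟩
    refine ⟨(f 0).1, (f 0).2, (f 1).1, (f 1).2, (f 2).1, (f 2).2, ?_, ?_, ?_, ?_⟩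
    · intro h
      have : f 0 = f 2 := Subtype.ext h
      exact absurd (f.injective this) (by decide)
    · have := f.map_rel_iff.mpr (show (pathGraph 3).Adj 0 1 by rw [pathGraph_adj]; decide)
      simpa using this
    · have := f.map_rel_iff.mpr (show (pathGraph 3).Adj 1 2 by rw [pathGraph_adj]; decide)
      simpa using this
    · intro h
      have : (G.induce X).Adj (f 0) (f 2) := by simpa using h
      have := f.map_rel_iff.mp this
      rw [pathGraph_adj] at this
      exact absurd this (by decide)
  · rintro ⟨a, ha, b, hb, c, hc, hac, hab, hbc, hnac⟩
    refine ⟨⟨⟨![⟨a, ha⟩, ⟨b, hb⟩, ⟨c, hc⟩], ?_⟩, ?_⟩⟩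
    · intro i j hij
      fin_cases i <;> fin_cases j <;>
        simp_all [Subtype.ext_iff] <;>
        first
        | rfl
        | exact absurd hij hab.ne
        | exact absurd hij.symm hab.ne
        | exact absurd hij hbc.ne
        | exact absurd hij.symm hbc.ne
        | exact absurd hij hac
        | exact absurd hij.symm hac
    · intro i j
      show (G.induce X).Adj (![⟨a, ha⟩, ⟨b, hb⟩, ⟨c, hc⟩] i) (![⟨a, ha⟩, ⟨b, hb⟩, ⟨c, hc⟩] j) ↔ _
      fin_cases i <;> fin_cases j <;>
        simp [pathGraph_adj, hab, hbc, hab.symm, hbc.symm, hnac] <;>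
        exact fun h => hnac (G.adj_symm h)

theorem stmt_11 {α : Type*} [Fintype α] (G : SimpleGraph α) (hcog : IsCograph G)
    (hnp : ¬ Partitionable G)
    (hmin : ∀ A : Set α, A ≠ Set.univ → Partitionable (G.induce A)) :
    G.Connected := by
  have hne : Nonempty α := by
    by_contra h
    rw [not_nonempty_iff] at h
    refine hnp ⟨∅, ?_, ?_⟩
    · rw [induce_cliqueFree3_iff]
      intro a ha
      exact absurd ha (Set.notMem_empty a)
    · rw [contains_path3_iff]
      rintro ⟨a, -⟩
      exact h.elim a
  rw [connected_iff]
  refine ⟨?_, hne⟩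
  intro u v
  by_contra huv
  set S : Set α := {x | G.Reachable u x} with hSdef
  have hclosed : ∀ {x y : α}, G.Adj x y → x ∈ S → y ∈ S :=
    fun hxy hx => hx.trans hxy.reachable
  have hclosed' : ∀ {x y : α}, G.Adj x y → x ∉ S → y ∉ S :=
    fun hxy hx hy => hx (hclosed hxy.symm hy)
  obtain ⟨A₁, h1t, h1p⟩ := hmin S (fun h => huv (show v ∈ S from h ▸ Set.mem_univ v))
  obtain ⟨A₂, h2t, h2p⟩ := hmin Sᶜ
    (fun h => (show u ∈ Sᶜ from h ▸ Set.mem_univ u) (Reachable.refl u))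
  apply hnp
  refine ⟨(Subtype.val '' A₁) ∪ (Subtype.val '' A₂), ?_, ?_⟩
  · rw [induce_cliqueFree3_iff]
    intro a ha b hb c hc hab hac hbc
    have key : ∀ x (hx : x ∈ S),
        x ∈ (Subtype.val '' A₁) ∪ (Subtype.val '' A₂) → (⟨x, hx⟩ : ↥S) ∈ A₁ := by
      rintro x hx (⟨y, hy, rfl⟩ | ⟨y, hy, rfl⟩)
      · convert hy
      · exact absurd hx y.2
    have key' : ∀ x (hx : x ∈ Sᶜ),
        x ∈ (Subtype.val '' A₁) ∪ (Subtype.val '' A₂) → (⟨x, hx⟩ : ↥Sᶜ) ∈ A₂ := by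
      rintro x hx (⟨y, hy, rfl⟩ | ⟨y, hy, rfl⟩)
      · exact absurd y.2 hx
      · convert hy
    by_cases haS : a ∈ S
    · have hbS : b ∈ S := hclosed hab haS
      have hcS : c ∈ S := hclosed hac haS
      exact (induce_cliqueFree3_iff (G.induce S) A₁).mp h1t
        ⟨a, haS⟩ (key a haS ha) ⟨b, hbS⟩ (key b hbS hb) ⟨c, hcS⟩ (key c hcS hc)
        (by simpa using hab) (by simpa using hac) (by simpa using hbc)
    · have hbS : b ∉ S := hclosed' hab haS
      have hcS : c ∉ S := hclosed' hac haS
      exact (induce_cliqueFree3_iff (G.induce Sᶜ) A₂).mp h2t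
        ⟨a, haS⟩ (key' a haS ha) ⟨b, hbS⟩ (key' b hbS hb) ⟨c, hcS⟩ (key' c hcS hc)
        (by simpa using hab) (by simpa using hac) (by simpa using hbc)
  · rw [contains_path3_iff]
    rintro ⟨a, ha, b, hb, c, hc, hac, hab, hbc, hnac⟩
    rw [Set.mem_compl_iff] at ha hb hc
    have key : ∀ x (hx : x ∈ S),
        x ∉ (Subtype.val '' A₁) ∪ (Subtype.val '' A₂) → (⟨x, hx⟩ : ↥S) ∉ A₁ :=
      fun x hx hxA h => hxA (Or.inl ⟨⟨x, hx⟩, h, rfl⟩)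
    have key' : ∀ x (hx : x ∈ Sᶜ),
        x ∉ (Subtype.val '' A₁) ∪ (Subtype.val '' A₂) → (⟨x, hx⟩ : ↥Sᶜ) ∉ A₂ :=
      fun x hx hxA h => hxA (Or.inr ⟨⟨x, hx⟩, h, rfl⟩)
    by_cases hbS : b ∈ S
    · have haS : a ∈ S := hclosed hab.symm hbS
      have hcS : c ∈ S := hclosed hbc hbS
      refine h1p ((contains_path3_iff (G.induce S) A₁ᶜ).mpr
        ⟨⟨a, haS⟩, key a haS ha, ⟨b, hbS⟩, key b hbS hb, ⟨c, hcS⟩, key c hcS hc,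
          ?_, by simpa using hab, by simpa using hbc, by simpa using hnac⟩)
      intro h
      exact hac (congrArg Subtype.val h)
    · have haS : a ∉ S := hclosed' hab.symm hbS
      have hcS : c ∉ S := hclosed' hbc hbS
      refine h2p ((contains_path3_iff (G.induce Sᶜ) A₂ᶜ).mpr
        ⟨⟨a, haS⟩, key' a haS ha, ⟨b, hbS⟩, key' b hbS hb, ⟨c, hcS⟩, key' c hcS hc,
          ?_, by simpa using hab, by simpa using hbc, by simpa using hnac⟩)
      intro h
      exact hac (congrArg Subtype.val h)
end

section
/- A cograph G = (V,E) is partitionable if and only if there exists a partition {A,B} of V such that the subgraph induced by A is P3-free (a disjoint union of cliques) and the subgraph induced by B is bipartite. -/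
open SimpleGraph

lemma p4_embed {V : Type*} (H : SimpleGraph V) {a b c d : V}
    (hab : H.Adj a b) (hbc : H.Adj b c) (hcd : H.Adj c d)
    (hac : ¬ H.Adj a c) (had : ¬ H.Adj a d) (hbd : ¬ H.Adj b d)
    (nac : a ≠ c) (nad : a ≠ d) (nbd : b ≠ d) :
    Contains H (pathGraph 4) := by
  refine ⟨⟨⟨![a,b,c,d], ?_⟩, ?_⟩⟩
  · intro i j
    fin_cases i <;> fin_cases j <;> simp <;>
      first
        | exact hab.ne | exact hab.ne' | exact hbc.ne | exact hbc.ne'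
        | exact hcd.ne | exact hcd.ne' | exact nac | exact nac.symm
        | exact nad | exact nad.symm | exact nbd | exact nbd.symm
  · intro i j
    have hba : H.Adj b a := hab.symm
    have hcb : H.Adj c b := hbc.symm
    have hdc : H.Adj d c := hcd.symm
    have hca : ¬ H.Adj c a := fun h => hac h.symm
    have hda : ¬ H.Adj d a := fun h => had h.symm
    have hdb : ¬ H.Adj d b := fun h => hbd h.symm
    have hla : ¬ H.Adj a a := H.loopless.irrefl a
    have hlb : ¬ H.Adj b b := H.loopless.irrefl b
    have hlc : ¬ H.Adj c c := H.loopless.irrefl c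
    have hld : ¬ H.Adj d d := H.loopless.irrefl d
    show H.Adj (![a,b,c,d] i) (![a,b,c,d] j) ↔ (pathGraph 4).Adj i j
    fin_cases i <;> fin_cases j <;>
      simp [pathGraph_adj, hab, hbc, hcd, hba, hcb, hdc, hac, had, hbd,
        hca, hda, hdb, hla, hlb, hlc, hld] <;> decide

lemma step_nbhd {V : Type*} (H : SimpleGraph V) (htri : H.CliqueFree 3)
    (hp4 : ¬ Contains H (pathGraph 4)) {x z y : V} (hxz : H.Adj x z) (hzy : H.Adj z y) :
    H.neighborSet x = H.neighborSet y := by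
  classical
  have noTri : ∀ a b c : V, H.Adj a b → H.Adj a c → ¬ H.Adj b c := by
    intro a b c hab hac hbc
    exact htri {a, b, c} (SimpleGraph.is3Clique_triple_iff.mpr ⟨hab, hac, hbc⟩)
  by_cases hxy : x = y
  · rw [hxy]
  have hnadj : ¬ H.Adj x y := fun h => noTri z x y hxz.symm hzy h
  have key : ∀ a b c : V, H.Adj a c → H.Adj c b → ¬ H.Adj a b → a ≠ b →
      ∀ w, w ∈ H.neighborSet a → w ∈ H.neighborSet b := by
    intro a b c hac hcb hab nab w hw
    simp only [SimpleGraph.mem_neighborSet] at hw ⊢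
    by_cases hwc : w = c
    · rw [hwc]; exact hcb.symm
    by_cases hwb : H.Adj b w
    · exact hwb
    · -- induced P4 : w - a - c - b
      exfalso
      apply hp4
      have hwb' : ¬ H.Adj w b := fun h => hwb h.symm
      have hwc' : ¬ H.Adj w c := fun h => noTri a w c hw hac h
      have nwb : w ≠ b := fun h => hab (h ▸ hw)
      exact p4_embed H hw.symm hac hcb hwc' hwb' hab hwc nwb nab
  ext w
  exact ⟨key x y z hxz hzy hnadj hxy w, key y x z hzy.symm hxz.symm
    (fun h => hnadj h.symm) (Ne.symm hxy) w⟩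

lemma walk_nbhd {V : Type*} (H : SimpleGraph V) (htri : H.CliqueFree 3)
    (hp4 : ¬ Contains H (pathGraph 4)) : ∀ {x y : V}, H.Walk x y →
    (H.neighborSet y = H.neighborSet x ∨
      ∃ z, H.Adj x z ∧ H.neighborSet y = H.neighborSet z) := by
  intro x y p
  induction p with
  | nil => exact Or.inl rfl
  | cons h q ih =>
    rcases ih with h1 | ⟨z, hz, hNz⟩
    · exact Or.inr ⟨_, h, h1⟩
    · exact Or.inl (hNz.trans (step_nbhd H htri hp4 h hz).symm)

lemma triFree_p4Free_colorable {V : Type*} (H : SimpleGraph V) (htri : H.CliqueFree 3)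
    (hp4 : ¬ Contains H (pathGraph 4)) : H.Colorable 2 := by
  classical
  refine ⟨SimpleGraph.Coloring.mk
    (fun v => if H.neighborSet v =
        H.neighborSet (Quot.out (H.connectedComponentMk v)) then 0 else 1) ?_⟩
  intro u v huv
  simp only [ne_eq]
  have hrep : Quot.out (H.connectedComponentMk u) = Quot.out (H.connectedComponentMk v) :=
    congrArg Quot.out (SimpleGraph.ConnectedComponent.sound huv.reachable)
  rw [← hrep]
  set r := Quot.out (H.connectedComponentMk u) with hr
  have hreach : H.Reachable r u := SimpleGraph.ConnectedComponent.exact (Quot.out_eq _)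
  by_cases h1 : H.neighborSet u = H.neighborSet r
  · have h2 : ¬ H.neighborSet v = H.neighborSet r := by
      intro h2
      have hv : v ∈ H.neighborSet u := huv
      rw [h1, ← h2] at hv
      exact H.loopless.irrefl v hv
    rw [if_pos h1, if_neg h2]
    decide
  · obtain ⟨p⟩ := hreach
    rcases walk_nbhd H htri hp4 p with h' | ⟨z, hrz, hNz⟩
    · exact absurd h' h1
    have hur : H.Adj u r := by
      have hmem : r ∈ H.neighborSet z := hrz.symm
      rw [← hNz] at hmem
      exact hmem
    have h2 : H.neighborSet v = H.neighborSet r :=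
      step_nbhd H htri hp4 huv.symm hur
    rw [if_neg h1, if_pos h2]
    decide

lemma cograph_induce {α : Type*} (G : SimpleGraph α) (hcog : IsCograph G) (A : Set α) :
    ¬ Contains (G.induce A) (pathGraph 4) := by
  intro ⟨e⟩
  exact hcog ⟨(SimpleGraph.Embedding.induce A).comp e⟩

theorem stmt_13 {α : Type*} [Fintype α] (G : SimpleGraph α) (hcog : IsCograph G) :
    Partitionable G ↔
      ∃ A : Set α, ¬ Contains (G.induce A) (pathGraph 3) ∧ (G.induce Aᶜ).Colorable 2 := by
  constructor
  · rintro ⟨A, hA3, hAc⟩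
    refine ⟨Aᶜ, hAc, ?_⟩
    rw [compl_compl]
    exact triFree_p4Free_colorable _ hA3 (cograph_induce G hcog A)
  · rintro ⟨A, hA, hcol⟩
    refine ⟨Aᶜ, hcol.cliqueFree (by norm_num), ?_⟩
    rw [compl_compl]
    exact hA
end
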